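/- Let L be a contour bundle in ℝ² and let α, β > 0. If Γ is an admissible contour that is a local minimizer of the contour-based energy E_c (and whose imaginary part Γ_im = Γ \ ∂L is nonempty), then Γ is a polygon whose vertices are all anchored within ∂L: every connected component of Γ \ ∂L is an open straight line segment whose two endpoints lie in the finite set ∂L, so Γ is a simple closed polygon all of whose vertices belong to ∂L. -/

import Mathlib

open Set Metric MeasureTheory Filter
open scoped ENNReal RealInnerProductSpace Topology

noncomputable section

/-- The Euclidean plane `ℝ²`. -/
abbrev Pt : Type := EuclideanSpace ℝ (Fin 2)

/-- `γ` is piecewise `C^k` on `[a, b]`: there is a finite partition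
`a = t₀ < t₁ < ⋯ < tₙ = b` such that `γ` is `C^k` on each closed piece. -/
def PiecewiseCkOn (k : ℕ) (γ : ℝ → Pt) (a b : ℝ) : Prop :=
  ∃ (n : ℕ) (t : ℕ → ℝ), t 0 = a ∧ t n = b ∧ (∀ i < n, t i < t (i + 1)) ∧
    ∀ i < n, ContDiffOn ℝ k γ (Set.Icc (t i) (t (i + 1)))

/-- A simple closed piecewise-`C²` curve in the plane: a continuous `L`-periodic loop,
injective on `[0, L)`, piecewise `C²`. -/
structure SCCurve where
  L : ℝ
  hL : 0 < L
  γ : ℝ → Pt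
  cont : Continuous γ
  per : Function.Periodic γ L
  inj : Set.InjOn γ (Set.Ico 0 L)
  pc2 : PiecewiseCkOn 2 γ 0 L

/-- The trace (image) of a simple closed curve. -/
def SCCurve.image (c : SCCurve) : Set Pt := Set.range c.γ

/-- A subset of the plane is a simple closed piecewise-`C²` curve. -/
def IsSimpleClosedCurve (Γ : Set Pt) : Prop := ∃ c : SCCurve, c.image = Γ

/-- A configuration `Q = Q₁ ∪ ⋯ ∪ Q_k`: finitely many pairwise disjoint compact sets,
each the closure of its nonempty interior, whose frontiers are piecewise-`C²`
simple closed curves. -/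
structure Config where
  k : ℕ
  piece : Fin k → Set Pt
  compact : ∀ i, IsCompact (piece i)
  regular : ∀ i, piece i = closure (interior (piece i))
  nonemptyInt : ∀ i, (interior (piece i)).Nonempty
  disj : ∀ i j, i ≠ j → Disjoint (piece i) (piece j)
  bcurve : Fin k → SCCurve
  hbc : ∀ i, frontier (piece i) = (bcurve i).image

/-- The union `Q = Q₁ ∪ ⋯ ∪ Q_k`. -/
def Config.carrier (Q : Config) : Set Pt := ⋃ i, Q.piece i

/-- A piecewise-`C²` loop is generic if at every point the one-sided tangent vectors
exist and are nonzero, and the outgoing tangent is never a negative multiple of the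
incoming one (no cusps: at every kink both the outer span `θ` and the inner span
`θ* = 2π − θ` are strictly positive). -/
def SCCurve.Generic (c : SCCurve) : Prop :=
  ∀ t : ℝ, ∃ v w : Pt, v ≠ 0 ∧ w ≠ 0 ∧
    HasDerivWithinAt c.γ v (Set.Iic t) t ∧ HasDerivWithinAt c.γ w (Set.Ici t) t ∧
    ∀ r : ℝ, r < 0 → w ≠ r • v

/-- A generic configuration: all boundary curves are generic. -/
def Config.Generic (Q : Config) : Prop := ∀ i, (Q.bcurve i).Generic

/-- Real part `Γ_re = Γ ∩ ∂Q` of a contour relative to a configuration with carrier `Q`. -/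
def reSet (Q Γ : Set Pt) : Set Pt := Γ ∩ frontier Q

/-- Imaginary part `Γ_im = Γ \ ∂Q`. -/
def imSet (Q Γ : Set Pt) : Set Pt := Γ \ frontier Q

/-- The set of connected components of a set `S ⊆ ℝ²`. -/
def components (S : Set Pt) : Set (Set Pt) := {C | ∃ x ∈ S, C = connectedComponentIn S x}

/-- An admissible contour for the object-based model: a simple closed piecewise-`C²`
curve avoiding the interior of `Q`, whose imaginary part has finitely many connected
components, each of whose closures contains two distinct endpoints. -/
def Admissible (Q Γ : Set Pt) : Prop :=
  IsSimpleClosedCurve Γ ∧ Γ ∩ interior Q = ∅ ∧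
  (components (imSet Q Γ)).Finite ∧
  ∀ C ∈ components (imSet Q Γ),
    ∃ a b : Pt, a ≠ b ∧ a ∈ closure C \ C ∧ b ∈ closure C \ C

/-- The energy `E_o[Γ | α, β] = α·H¹(Γ_re) + β·H¹(Γ_im)`. -/
def Eo (α β : ℝ) (Q Γ : Set Pt) : ℝ≥0∞ :=
  ENNReal.ofReal α * μH[1] (reSet Q Γ) + ENNReal.ofReal β * μH[1] (imSet Q Γ)

/-- `Γ` is a local minimizer of `E_o[·|α,β]`: it beats every admissible contour within
some positive Hausdorff distance. -/
def IsLocalMinEo (α β : ℝ) (Q Γ : Set Pt) : Prop :=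
  ∃ ε > (0:ℝ), ∀ Γ' : Set Pt, Admissible Q Γ' →
    Metric.hausdorffDist Γ Γ' < ε → Eo α β Q Γ ≤ Eo α β Q Γ'

/-- A junction point of `Γ`: an endpoint of (the closure of) a connected component of
the imaginary part. -/
def IsJunction (Q Γ : Set Pt) (z : Pt) : Prop :=
  ∃ C ∈ components (imSet Q Γ), z ∈ closure C \ C

/-- A compact simple arc from `p` to `q`: the image of an injective piecewise-`C²`
continuous path on `[0,1]` with distinct endpoints `p ≠ q`. -/
def IsSimpleArc (l : Set Pt) (p q : Pt) : Prop :=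
  p ≠ q ∧ ∃ γ : ℝ → Pt, ContinuousOn γ (Set.Icc 0 1) ∧ Set.InjOn γ (Set.Icc 0 1) ∧
    PiecewiseCkOn 2 γ 0 1 ∧ γ '' Set.Icc 0 1 = l ∧ γ 0 = p ∧ γ 1 = q

/-- A contour bundle `L = l₁ ∪ ⋯ ∪ l_n`: finitely many pairwise disjoint compact simple
arcs, each with two distinct endpoints. -/
structure ContourBundle where
  n : ℕ
  arc : Fin n → Set Pt
  ep1 : Fin n → Pt
  ep2 : Fin n → Pt
  harc : ∀ i, IsSimpleArc (arc i) (ep1 i) (ep2 i)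
  hcompact : ∀ i, IsCompact (arc i)
  disj : ∀ i j, i ≠ j → Disjoint (arc i) (arc j)

/-- The union `L = l₁ ∪ ⋯ ∪ l_n`. -/
def ContourBundle.carrier (L : ContourBundle) : Set Pt := ⋃ i, L.arc i

/-- The (finite) endpoint set `∂L = ⋃ᵢ {aᵢ, bᵢ}`. -/
def ContourBundle.eps (L : ContourBundle) : Set Pt := ⋃ i, ({L.ep1 i, L.ep2 i} : Set Pt)

/-- `L° = L \ ∂L`. -/
def ContourBundle.inn (L : ContourBundle) : Set Pt := L.carrier \ L.eps

/-- An admissible contour for the contour-based model: a simple closed piecewise-`C²`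
curve with `Γ ∩ L° = ∅`. -/
def AdmissibleC (L : ContourBundle) (Γ : Set Pt) : Prop :=
  IsSimpleClosedCurve Γ ∧ Γ ∩ L.inn = ∅

/-- The contour-based energy `E_c[Γ] = −α·card(Γ ∩ ∂L) + β·H¹(Γ)`, valued in `EReal`. -/
def Ec (L : ContourBundle) (α β : ℝ) (Γ : Set Pt) : EReal :=
  (β : EReal) * ((μH[1] Γ : ℝ≥0∞) : EReal) - (α : EReal) * (((Γ ∩ L.eps).ncard : ℝ) : EReal)

/-- `Γ` is a local minimizer of `E_c`. -/
def IsLocalMinEc (L : ContourBundle) (α β : ℝ) (Γ : Set Pt) : Prop :=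
  ∃ ε > (0:ℝ), ∀ Γ' : Set Pt, AdmissibleC L Γ' →
    Metric.hausdorffDist Γ Γ' < ε → Ec L α β Γ ≤ Ec L α β Γ'


/-! ### Auxiliary machinery for Statement 7 -/

namespace Stmt7Aux

open MeasureTheory

/-! #### Measure-theoretic basics -/

lemma h1_Icc (a b : ℝ) : μH[1] (Icc a b) = ENNReal.ofReal (b - a) := by
  rw [MeasureTheory.hausdorffMeasure_real]; exact Real.volume_Icc

lemma edist_le_H1 {K : Set Pt} (hK : IsPreconnected K) {x y : Pt} (hx : x ∈ K) (hy : y ∈ K) :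
    edist x y ≤ μH[1] K := by
  have hlip : LipschitzWith 1 (fun z : Pt => dist z x) := LipschitzWith.dist_left x
  have himage : Icc (0 : ℝ) (dist y x) ⊆ (fun z : Pt => dist z x) '' K := by
    have := hK.intermediate_value hx hy (hlip.continuous.continuousOn
      (s := K))
    simpa using this
  calc edist x y = ENNReal.ofReal (dist y x) := by rw [edist_dist, dist_comm]
    _ = μH[1] (Icc (0:ℝ) (dist y x)) := by rw [h1_Icc]; simp
    _ ≤ μH[1] ((fun z : Pt => dist z x) '' K) := measure_mono himage
    _ ≤ μH[1] K := by simpa using hlip.hausdorffMeasure_image_le zero_le_one K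

lemma subset_segment_closed {K : Set Pt} (hconn : IsPreconnected K) {a b : Pt}
    (ha : a ∈ K) (hb : b ∈ K) (hsub : K ⊆ segment ℝ a b) : K = segment ℝ a b := by
  rcases eq_or_ne a b with rfl | hab
  · rw [segment_same] at hsub ⊢
    exact Subset.antisymm hsub (by simpa using ha)
  · have hba : b - a ≠ 0 := sub_ne_zero.mpr (Ne.symm hab)
    have hnrm : ‖b - a‖ ^ 2 ≠ 0 := pow_ne_zero 2 (norm_ne_zero_iff.mpr hba)
    set φ : Pt → ℝ := fun y => (inner ℝ (y - a) (b - a) : ℝ) / ‖b - a‖^2 with hφ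
    have hφcont : Continuous φ := by
      apply Continuous.div_const
      exact Continuous.inner (continuous_id.sub continuous_const) continuous_const
    have hψ : ∀ τ : ℝ, φ (a + τ • (b - a)) = τ := by
      intro τ
      simp only [hφ, add_sub_cancel_left]
      rw [real_inner_smul_left, real_inner_self_eq_norm_sq]
      field_simp
    have hφa : φ a = 0 := by
      have := hψ 0
      simpa using this
    have hφb : φ b = 1 := by
      have := hψ 1
      rw [one_smul] at this
      simpa using this
    have himg : Icc (0:ℝ) 1 ⊆ φ '' K := by
      have h2 := hconn.intermediate_value ha hb (hφcont.continuousOn)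
      rw [hφa, hφb] at h2; exact h2
    refine Subset.antisymm hsub ?_
    rintro y hy
    rw [segment_eq_image'] at hy
    obtain ⟨τ, hτ, rfl⟩ := hy
    obtain ⟨z, hz, hφz⟩ := himg hτ
    have hφz' : φ z = τ := hφz
    have hzseg := hsub hz
    rw [segment_eq_image'] at hzseg
    obtain ⟨τ', _, hz'⟩ := hzseg
    have hz'' : a + τ' • (b - a) = z := hz'
    rw [← hz'', hψ] at hφz'
    show a + τ • (b - a) ∈ K
    rw [← hφz', hz'']
    exact hz

lemma lower_piece {K P : Set Pt} (hconn : IsPreconnected K) {p : Pt} (hp : p ∈ K)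
    {q : Pt} (hq : q ∈ K) {m : ℝ} (hm : 0 ≤ m) (hmq : m ≤ dist q p)
    (hsub : ∀ y ∈ K, dist y p < m → y ∈ P) : ENNReal.ofReal m ≤ μH[1] P := by
  have hlip : LipschitzWith 1 (fun z : Pt => dist z p) := LipschitzWith.dist_left p
  have himg : Icc (0:ℝ) (dist q p) ⊆ (fun z : Pt => dist z p) '' K := by
    simpa using hconn.intermediate_value hp hq (hlip.continuous.continuousOn)
  have hsub2 : Ico (0:ℝ) m ⊆ (fun z : Pt => dist z p) '' P := by
    rintro τ hτ
    obtain ⟨y, hy, hyτ⟩ := himg ⟨hτ.1, le_trans hτ.2.le hmq⟩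
    have hyτ' : dist y p = τ := hyτ
    exact ⟨y, hsub y hy (by rw [hyτ']; exact hτ.2), hyτ⟩
  calc ENNReal.ofReal m = μH[1] (Ico (0:ℝ) m) := by
        rw [MeasureTheory.hausdorffMeasure_real, Real.volume_Ico, sub_zero]
    _ ≤ μH[1] ((fun z : Pt => dist z p) '' P) := measure_mono hsub2
    _ ≤ μH[1] P := by simpa using hlip.hausdorffMeasure_image_le zero_le_one P

lemma no_far_point {K : Set Pt} (hc : IsCompact K) (hconn : IsPreconnected K)
    {a b z : Pt} (ha : a ∈ K) (hb : b ∈ K) (hz : z ∈ K)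
    (hle : μH[1] K ≤ edist a b)
    (hts : dist z b ≤ dist z a) (hgt : dist a b < dist a z + dist z b) : False := by
  have hsd : dist a z ≤ dist a b := by
    have h1 := le_trans (edist_le_H1 hconn ha hz) hle
    rw [edist_dist, edist_dist] at h1
    exact (ENNReal.ofReal_le_ofReal_iff dist_nonneg).mp h1
  set d := dist a b with hd
  set s := dist a z with hs
  set t := dist z b with ht
  have hts' : t ≤ s := by rw [hs, ht, dist_comm a z]; exact hts
  set cex := (s + t - d)/2 with hcex
  have hcpos : 0 < cex := by rw [hcex]; linarith
  have hdnn : 0 ≤ d := dist_nonneg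
  have hspos : 0 < s := by nlinarith
  set ρ := min (2*cex/3) (s/2) with hρ
  have hρpos : 0 < ρ := lt_min (by linarith) (by linarith)
  have hρs2 : ρ ≤ s/2 := min_le_right _ _
  have hρc : 3*ρ ≤ 2*cex := by
    have := min_le_left (2*cex/3) (s/2)
    rw [← hρ] at this; linarith
  set P₁ := K ∩ {y : Pt | dist y z ≤ ρ} with hP₁
  set P₂ := K ∩ {y : Pt | ρ < dist y z ∧ dist y a ≤ s - 2*ρ} with hP₂
  set P₃ := K ∩ {y : Pt | ρ < dist y z ∧ s - 2*ρ < dist y a} with hP₃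
  have hm₁ : ENNReal.ofReal ρ ≤ μH[1] P₁ := by
    refine lower_piece hconn hz ha hρpos.le ?_ ?_
    · rw [← hs]; linarith
    · intro y hy hlt; exact ⟨hy, hlt.le⟩
  have hm₂ : ENNReal.ofReal (s - 2*ρ) ≤ μH[1] P₂ := by
    refine lower_piece hconn ha hb ?_ ?_ ?_
    · linarith
    · rw [dist_comm b a, ← hd]; linarith
    · intro y hy hlt
      refine ⟨hy, ?_, hlt.le⟩
      have htri : s ≤ dist y a + dist y z := by
        rw [hs]
        calc dist a z ≤ dist a y + dist y z := dist_triangle a y z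
          _ = dist y a + dist y z := by rw [dist_comm a y]
      linarith
  have hm₃ : ENNReal.ofReal (d - s + 2*ρ) ≤ μH[1] P₃ := by
    refine lower_piece hconn hb ha ?_ ?_ ?_
    · linarith
    · rw [← hd]; linarith
    · intro y hy hlt
      have htri1 : d ≤ dist y a + dist y b := by
        rw [hd]
        calc dist a b ≤ dist a y + dist y b := dist_triangle a y b
          _ = dist y a + dist y b := by rw [dist_comm a y]
      have htri2 : t ≤ dist y z + dist y b := by
        rw [ht]
        calc dist z b ≤ dist z y + dist y b := dist_triangle z y b
          _ = dist y z + dist y b := by rw [dist_comm z y]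
      exact ⟨hy, by linarith, by linarith⟩
  have hmeas1 : MeasurableSet P₁ :=
    (hc.measurableSet).inter ((isClosed_le ((continuous_id.dist continuous_const)) continuous_const).measurableSet)
  have hmeas2 : MeasurableSet P₂ := by
    refine (hc.measurableSet).inter (MeasurableSet.inter ?_ ?_)
    · exact (isOpen_lt continuous_const (continuous_id.dist continuous_const)).measurableSet
    · exact (isClosed_le (continuous_id.dist continuous_const) continuous_const).measurableSet
  have hmeas3 : MeasurableSet P₃ := by
    refine (hc.measurableSet).inter (MeasurableSet.inter ?_ ?_)
    · exact (isOpen_lt continuous_const (continuous_id.dist continuous_const)).measurableSet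
    · exact (isOpen_lt continuous_const (continuous_id.dist continuous_const)).measurableSet
  have hd12 : Disjoint P₁ P₂ := by
    rw [Set.disjoint_left]
    rintro y ⟨-, h1⟩ ⟨-, h2, -⟩
    exact absurd h1 (not_le.mpr h2)
  have hd13 : Disjoint P₁ P₃ := by
    rw [Set.disjoint_left]
    rintro y ⟨-, h1⟩ ⟨-, h2, -⟩
    exact absurd h1 (not_le.mpr h2)
  have hd23 : Disjoint P₂ P₃ := by
    rw [Set.disjoint_left]
    rintro y ⟨-, -, h1⟩ ⟨-, -, h2⟩
    exact absurd h1 (not_le.mpr h2)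
  have hsum : μH[1] P₁ + μH[1] P₂ + μH[1] P₃ ≤ μH[1] K := by
    have hun : μH[1] (P₁ ∪ (P₂ ∪ P₃)) = μH[1] P₁ + (μH[1] P₂ + μH[1] P₃) := by
      rw [measure_union (Set.disjoint_union_right.mpr ⟨hd12, hd13⟩) (hmeas2.union hmeas3),
        measure_union hd23 hmeas3]
    have hsubK : P₁ ∪ (P₂ ∪ P₃) ⊆ K := by
      rintro y (⟨hy, -⟩ | ⟨hy, -⟩ | ⟨hy, -⟩) <;> exact hy
    calc μH[1] P₁ + μH[1] P₂ + μH[1] P₃ = μH[1] (P₁ ∪ (P₂ ∪ P₃)) := by rw [hun]; ring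
      _ ≤ μH[1] K := measure_mono hsubK
  have hbig : ENNReal.ofReal (d + ρ) ≤ μH[1] K := by
    have e1 : ENNReal.ofReal (d + ρ)
        = ENNReal.ofReal ρ + ENNReal.ofReal (s - 2*ρ) + ENNReal.ofReal (d - s + 2*ρ) := by
      rw [← ENNReal.ofReal_add (by linarith) (by linarith),
        ← ENNReal.ofReal_add (by linarith) (by linarith)]
      ring_nf
    rw [e1]
    exact le_trans (add_le_add (add_le_add hm₁ hm₂) hm₃) hsum
  have hfinal : ENNReal.ofReal (d + ρ) ≤ ENNReal.ofReal d := by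
    refine le_trans hbig (le_trans hle ?_)
    rw [edist_dist]
  have := (ENNReal.ofReal_le_ofReal_iff hdnn).mp hfinal
  linarith

lemma eq_segment_of_H1_le {K : Set Pt} (hc : IsCompact K) (hconn : IsPreconnected K)
    {a b : Pt} (ha : a ∈ K) (hb : b ∈ K) (hle : μH[1] K ≤ edist a b) :
    K = segment ℝ a b := by
  rcases eq_or_ne a b with rfl | hab
  · have hzero : μH[1] K = 0 := le_antisymm (by simpa using hle) (zero_le)
    have hall : ∀ z ∈ K, z = a := by
      intro z hz
      have h1 := edist_le_H1 hconn ha hz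
      rw [hzero] at h1
      have h2 : edist a z = 0 := le_antisymm h1 (zero_le)
      exact (eq_of_edist_eq_zero h2).symm
    rw [segment_same]
    apply Subset.antisymm
    · intro z hz; exact hall z hz
    · intro z hz; rw [mem_singleton_iff.mp hz]; exact ha
  · refine subset_segment_closed hconn ha hb ?_
    intro z hz
    have heq : dist a z + dist z b = dist a b := by
      by_contra hne
      have hgt : dist a b < dist a z + dist z b :=
        lt_of_le_of_ne (dist_triangle a z b) (Ne.symm hne)
      rcases le_total (dist z b) (dist z a) with h | h
      · exact no_far_point hc hconn ha hb hz hle h hgt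
      · refine no_far_point hc hconn hb ha hz (by rwa [edist_comm] at hle) ?_ ?_
        · exact h
        · rw [dist_comm b a, dist_comm b z, dist_comm z a]
          linarith
    exact mem_segment_iff_wbtw.mpr (dist_add_dist_eq_iff.mp heq)

lemma wbtw_trans_outer {p q m n : Pt} (h₁ : Wbtw ℝ p q m) (h₂ : Wbtw ℝ q m n) (hqm : q ≠ m) :
    Wbtw ℝ p m n := by
  rw [← mem_segment_iff_wbtw, segment_eq_image'] at h₁ h₂ ⊢
  obtain ⟨t₁, ht₁, he₁0⟩ := h₁
  obtain ⟨t₂, ht₂, he₂0⟩ := h₂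
  have he₁ : p + t₁ • (m - p) = q := he₁0
  have he₂ : q + t₂ • (n - q) = m := he₂0
  have ht₂0 : t₂ ≠ 0 := by
    rintro rfl
    simp only [zero_smul, add_zero] at he₂
    exact hqm he₂
  have ht₂pos : 0 < t₂ := lt_of_le_of_ne ht₂.1 (Ne.symm ht₂0)
  have hqp : q - p = t₁ • (m - p) := by rw [← he₁, add_sub_cancel_left]
  have hmq : m - q = (1 - t₁) • (m - p) := by
    rw [sub_smul, one_smul, ← he₁]
    abel
  have he₂' : n - q = t₂⁻¹ • (m - q) := by
    have h5 : t₂ • (n - q) = m - q := by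
      conv_rhs => rw [← he₂]
      abel
    rw [← h5, smul_smul, inv_mul_cancel₀ ht₂0, one_smul]
  set lam : ℝ := (1 - t₁) / t₂ + t₁ with hlam
  have hnp : n - p = lam • (m - p) := by
    have h6 : n - p = (n - q) + (q - p) := by abel
    rw [h6, he₂', hmq, hqp, smul_smul, hlam, add_smul, div_eq_inv_mul]
  have h1t₁ : 0 ≤ 1 - t₁ := by linarith [ht₁.2]
  have hlam_ge : 1 ≤ lam := by
    have h3 : (1 - t₁) * t₂ ≤ 1 - t₁ := by nlinarith [ht₂.2]
    have h4 : (1 - t₁) ≤ (1 - t₁)/t₂ := (le_div_iff₀ ht₂pos).mpr h3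
    rw [hlam]; linarith
  have hlampos : 0 < lam := lt_of_lt_of_le one_pos hlam_ge
  have hinvle : lam⁻¹ ≤ 1 := by
    rw [inv_eq_one_div]
    exact div_le_one_of_le₀ hlam_ge hlampos.le
  refine ⟨lam⁻¹, ⟨inv_nonneg.mpr hlampos.le, hinvle⟩, ?_⟩
  show p + lam⁻¹ • (n - p) = m
  rw [hnp, smul_smul, inv_mul_cancel₀ hlampos.ne', one_smul]
  abel

/-! #### Curve basics -/

lemma reduce (c : SCCurve) (a w : ℝ) : ∃ w' ∈ Ico a (a + c.L), c.γ w' = c.γ w := by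
  refine ⟨toIcoMod c.hL a w, toIcoMod_mem_Ico c.hL a w, ?_⟩
  have h : toIcoMod c.hL a w = w - toIcoDiv c.hL a w • c.L := rfl
  rw [h]
  exact c.per.sub_zsmul_eq (toIcoDiv c.hL a w)

lemma injOn_window (c : SCCurve) (a : ℝ) : InjOn c.γ (Ico a (a + c.L)) := by
  intro w₁ h₁ w₂ h₂ he
  have e₁ : c.γ (toIcoMod c.hL 0 w₁) = c.γ w₁ := by
    rw [show toIcoMod c.hL 0 w₁ = w₁ - toIcoDiv c.hL 0 w₁ • c.L from rfl]
    exact c.per.sub_zsmul_eq _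
  have e₂ : c.γ (toIcoMod c.hL 0 w₂) = c.γ w₂ := by
    rw [show toIcoMod c.hL 0 w₂ = w₂ - toIcoDiv c.hL 0 w₂ • c.L from rfl]
    exact c.per.sub_zsmul_eq _
  have m₁ : toIcoMod c.hL 0 w₁ ∈ Ico (0:ℝ) c.L := by
    simpa using toIcoMod_mem_Ico c.hL 0 w₁
  have m₂ : toIcoMod c.hL 0 w₂ ∈ Ico (0:ℝ) c.L := by
    simpa using toIcoMod_mem_Ico c.hL 0 w₂
  have heq : toIcoMod c.hL 0 w₁ = toIcoMod c.hL 0 w₂ :=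
    c.inj m₁ m₂ (by rw [e₁, e₂, he])
  have hk : w₁ - w₂ = ((toIcoDiv c.hL 0 w₁ - toIcoDiv c.hL 0 w₂ : ℤ) : ℝ) * c.L := by
    have h1 : toIcoMod c.hL 0 w₁ = w₁ - (toIcoDiv c.hL 0 w₁ : ℝ) * c.L := by
      rw [show toIcoMod c.hL 0 w₁ = w₁ - toIcoDiv c.hL 0 w₁ • c.L from rfl, zsmul_eq_mul]
    have h2 : toIcoMod c.hL 0 w₂ = w₂ - (toIcoDiv c.hL 0 w₂ : ℝ) * c.L := by
      rw [show toIcoMod c.hL 0 w₂ = w₂ - toIcoDiv c.hL 0 w₂ • c.L from rfl, zsmul_eq_mul]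
    rw [h1, h2] at heq
    push_cast
    linarith
  set k : ℤ := toIcoDiv c.hL 0 w₁ - toIcoDiv c.hL 0 w₂ with hkdef
  rcases eq_or_ne k 0 with hk0 | hk0
  · rw [hk0] at hk
    push_cast at hk
    linarith
  · exfalso
    have habs : (1 : ℝ) ≤ |(k : ℝ)| := by
      have h1 : (1:ℤ) ≤ |k| := Int.one_le_abs hk0
      have h2 : ((1:ℤ):ℝ) ≤ ((|k|:ℤ):ℝ) := by exact_mod_cast h1
      simpa [Int.cast_abs] using h2
    have hlt : |w₁ - w₂| < c.L := by
      rw [abs_lt]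
      constructor <;> [skip; skip] <;>
        · obtain ⟨ha₁, hb₁⟩ := h₁; obtain ⟨ha₂, hb₂⟩ := h₂; linarith
    rw [hk, abs_mul, abs_of_pos c.hL] at hlt
    nlinarith [c.hL]

lemma image_window (c : SCCurve) (a : ℝ) : c.image = c.γ '' Icc a (a + c.L) := by
  apply Subset.antisymm
  · rintro y ⟨w, rfl⟩
    obtain ⟨w', hw', he⟩ := reduce c a w
    exact ⟨w', ⟨hw'.1, hw'.2.le⟩, he⟩
  · rintro y ⟨w, -, rfl⟩
    exact ⟨w, rfl⟩

lemma image_compact (c : SCCurve) : IsCompact c.image := by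
  rw [image_window c 0]
  exact isCompact_Icc.image c.cont

lemma image_nonempty (c : SCCurve) : c.image.Nonempty := ⟨c.γ 0, 0, rfl⟩

/-! #### PiecewiseCkOn manipulation -/

lemma pck_mono {n : ℕ} {t : ℕ → ℝ} (ht : ∀ i < n, t i < t (i + 1)) :
    ∀ i j, i ≤ j → j ≤ n → t i ≤ t j := by
  intro i j
  induction j with
  | zero => intro hij _; have : i = 0 := Nat.le_zero.mp hij; simp [this]
  | succ m ih =>
    intro hij hjn
    by_cases h : i = m + 1
    · simp [h]
    · exact le_trans (ih (by omega) (by omega)) (ht m (by omega)).le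

lemma pck_cover {n : ℕ} {t : ℕ → ℝ} (ht : ∀ i < n, t i < t (i + 1)) (hn : 1 ≤ n) :
    ∀ w ∈ Icc (t 0) (t n), ∃ i < n, w ∈ Icc (t i) (t (i + 1)) := by
  revert ht hn
  induction n with
  | zero => omega
  | succ m ih =>
    intro ht _ w hw
    rcases Nat.eq_zero_or_pos m with rfl | hm
    · exact ⟨0, by omega, hw⟩
    · rcases le_or_gt w (t m) with h | h
      · obtain ⟨i, hi, hmem⟩ := ih (fun i hi => ht i (by omega)) hm w ⟨hw.1, h⟩
        exact ⟨i, by omega, hmem⟩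
      · exact ⟨m, by omega, h.le, hw.2⟩

lemma pck_congr {k : ℕ} {γ γ' : ℝ → Pt} {a b : ℝ} (h : PiecewiseCkOn k γ a b)
    (he : ∀ w ∈ Icc a b, γ' w = γ w) : PiecewiseCkOn k γ' a b := by
  obtain ⟨n, t, h0, hn, hlt, hcd⟩ := h
  refine ⟨n, t, h0, hn, hlt, fun i hi => (hcd i hi).congr ?_⟩
  intro w hw
  refine he w ?_
  have h1 : t 0 ≤ t i := pck_mono hlt 0 i (by omega) (by omega)
  have h2 : t (i+1) ≤ t n := pck_mono hlt (i+1) n (by omega) (by omega)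
  exact ⟨by rw [← h0]; exact le_trans h1 hw.1, by rw [← hn]; exact le_trans hw.2 h2⟩

lemma pck_concat {k : ℕ} {γ : ℝ → Pt} {a b d : ℝ} (h₁ : PiecewiseCkOn k γ a b)
    (h₂ : PiecewiseCkOn k γ b d) : PiecewiseCkOn k γ a d := by
  classical
  obtain ⟨n₁, t₁, h10, h1n, h1lt, h1c⟩ := h₁
  obtain ⟨n₂, t₂, h20, h2n, h2lt, h2c⟩ := h₂
  refine ⟨n₁ + n₂, fun i => if i ≤ n₁ then t₁ i else t₂ (i - n₁), ?_, ?_, ?_, ?_⟩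
  · simp [h10]
  · by_cases h : n₂ = 0
    · subst h
      have hbd : b = d := by rw [← h20, h2n]
      dsimp only
      rw [if_pos (by omega : n₁ + 0 ≤ n₁)]
      have e : n₁ + 0 = n₁ := by omega
      rw [e, h1n, hbd]
    · have hh : ¬ (n₁ + n₂ ≤ n₁) := by omega
      dsimp only
      rw [if_neg hh]
      have e : n₁ + n₂ - n₁ = n₂ := by omega
      rw [e]
      exact h2n
  · intro i hi
    dsimp only
    by_cases hi1 : i + 1 ≤ n₁
    · rw [if_pos (by omega : i ≤ n₁), if_pos hi1]
      exact h1lt i (by omega)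
    · by_cases hi0 : i ≤ n₁
      · have hieq : i = n₁ := by omega
        rw [if_pos hi0, if_neg hi1, hieq, h1n]
        have h1 : n₁ + 1 - n₁ = 1 := by omega
        rw [h1, ← h20]
        exact h2lt 0 (by omega)
      · rw [if_neg hi0, if_neg (by omega : ¬ (i + 1 ≤ n₁))]
        have e : i + 1 - n₁ = (i - n₁) + 1 := by omega
        rw [e]
        exact h2lt (i - n₁) (by omega)
  · intro i hi
    dsimp only
    by_cases hi1 : i + 1 ≤ n₁
    · rw [if_pos (by omega : i ≤ n₁), if_pos hi1]
      exact h1c i (by omega)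
    · by_cases hi0 : i ≤ n₁
      · have hieq : i = n₁ := by omega
        rw [if_pos hi0, if_neg hi1, hieq, h1n]
        have h1 : n₁ + 1 - n₁ = 1 := by omega
        rw [h1, ← h20]
        exact h2c 0 (by omega)
      · rw [if_neg hi0, if_neg (by omega : ¬ (i + 1 ≤ n₁))]
        have e : i + 1 - n₁ = (i - n₁) + 1 := by omega
        rw [e]
        exact h2c (i - n₁) (by omega)

lemma pck_restrict_left_aux {k : ℕ} {γ : ℝ → Pt} :
    ∀ (n : ℕ) (t : ℕ → ℝ) (a b a' : ℝ), t 0 = a → t n = b → (∀ i < n, t i < t (i+1)) →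
      (∀ i < n, ContDiffOn ℝ k γ (Icc (t i) (t (i+1)))) → a ≤ a' → a' < b →
      PiecewiseCkOn k γ a' b := by
  classical
  intro n
  induction n with
  | zero =>
    intro t a b a' h0 hn _ _ ha hb
    exfalso
    have : a = b := by rw [← h0, hn]
    linarith
  | succ m ih =>
    intro t a b a' h0 hn hlt hc ha hb
    rcases lt_or_ge a' (t 1) with h | h
    · refine ⟨m+1, fun i => if i = 0 then a' else t i, by simp, ?_, ?_, ?_⟩
      · dsimp only
        rw [if_neg (by omega : ¬ (m + 1 = 0))]; exact hn
      · intro i hi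
        dsimp only
        rcases Nat.eq_zero_or_pos i with rfl | hip
        · rw [if_pos rfl, if_neg (by omega : ¬ ((0:ℕ)+1 = 0))]
          exact h
        · rw [if_neg (by omega : ¬ (i = 0)), if_neg (by omega : ¬ (i+1 = 0))]
          exact hlt i hi
      · intro i hi
        dsimp only
        rcases Nat.eq_zero_or_pos i with rfl | hip
        · rw [if_pos rfl, if_neg (by omega : ¬ ((0:ℕ)+1 = 0))]
          refine (hc 0 (by omega)).mono (Icc_subset_Icc ?_ le_rfl)
          rw [h0]; exact ha
        · rw [if_neg (by omega : ¬ (i = 0)), if_neg (by omega : ¬ (i+1 = 0))]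
          exact hc i hi
    · exact ih (fun i => t (i+1)) (t 1) b a' rfl hn
        (fun i hi => hlt (i+1) (by omega)) (fun i hi => hc (i+1) (by omega)) h hb

lemma pck_restrict_left {k : ℕ} {γ : ℝ → Pt} {a b a' : ℝ} (h : PiecewiseCkOn k γ a b)
    (h1 : a ≤ a') (h2 : a' < b) : PiecewiseCkOn k γ a' b := by
  obtain ⟨n, t, h0, hn, hlt, hc⟩ := h
  exact pck_restrict_left_aux n t a b a' h0 hn hlt hc h1 h2

lemma pck_restrict_right_aux {k : ℕ} {γ : ℝ → Pt} :
    ∀ (n : ℕ) (t : ℕ → ℝ) (a b b' : ℝ), t 0 = a → t n = b → (∀ i < n, t i < t (i+1)) →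
      (∀ i < n, ContDiffOn ℝ k γ (Icc (t i) (t (i+1)))) → b' ≤ b → a < b' →
      PiecewiseCkOn k γ a b' := by
  classical
  intro n
  induction n with
  | zero =>
    intro t a b b' h0 hn _ _ hb' hab
    exfalso
    have : a = b := by rw [← h0, hn]
    linarith
  | succ m ih =>
    intro t a b b' h0 hn hlt hc hb' hab
    rcases le_or_gt b' (t m) with h | h
    · exact ih t a (t m) b' h0 rfl (fun i hi => hlt i (by omega))
        (fun i hi => hc i (by omega)) h hab
    · refine ⟨m+1, fun i => if i = m+1 then b' else t i, ?_, by simp, ?_, ?_⟩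
      · dsimp only
        rw [if_neg (by omega : ¬ ((0:ℕ) = m+1))]; exact h0
      · intro i hi
        dsimp only
        by_cases hieq : i + 1 = m + 1
        · have him : i = m := by omega
          rw [if_neg (by omega : ¬ (i = m+1)), if_pos hieq, him]
          exact h
        · rw [if_neg (by omega : ¬ (i = m+1)), if_neg hieq]
          exact hlt i (by omega)
      · intro i hi
        dsimp only
        by_cases hieq : i + 1 = m + 1
        · have him : i = m := by omega
          rw [if_neg (by omega : ¬ (i = m+1)), if_pos hieq, him]
          refine (hc m (by omega)).mono (Icc_subset_Icc le_rfl ?_)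
          have : t (m+1) = b := hn
          rw [this]; exact hb'
        · rw [if_neg (by omega : ¬ (i = m+1)), if_neg hieq]
          exact hc i (by omega)

lemma pck_restrict_right {k : ℕ} {γ : ℝ → Pt} {a b b' : ℝ} (h : PiecewiseCkOn k γ a b)
    (h1 : b' ≤ b) (h2 : a < b') : PiecewiseCkOn k γ a b' := by
  obtain ⟨n, t, h0, hn, hlt, hc⟩ := h
  exact pck_restrict_right_aux n t a b b' h0 hn hlt hc h1 h2

lemma pck_shift {k : ℕ} {γ : ℝ → Pt} {a b : ℝ} (s : ℝ) (h : PiecewiseCkOn k γ a b) :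
    PiecewiseCkOn k (fun w => γ (w + s)) (a - s) (b - s) := by
  obtain ⟨n, t, h0, hn, hlt, hc⟩ := h
  refine ⟨n, fun i => t i - s, by dsimp only; rw [h0], by dsimp only; rw [hn],
    fun i hi => by dsimp only; linarith [hlt i hi], fun i hi => ?_⟩
  have hcomp : ContDiffOn ℝ k (γ ∘ (fun w : ℝ => w + s)) (Icc (t i - s) (t (i+1) - s)) := by
    refine (hc i hi).comp ((contDiff_id.add contDiff_const).contDiffOn) ?_
    intro w hw
    simp only [mem_Icc] at hw ⊢
    constructor <;> linarith [hw.1, hw.2]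
  exact hcomp

lemma pck_block (c : SCCurve) (m : ℤ) :
    PiecewiseCkOn 2 c.γ ((m : ℝ) * c.L) ((m : ℝ) * c.L + c.L) := by
  have h := pck_shift (-((m:ℝ) * c.L)) c.pc2
  have e1 : (0:ℝ) - -((m:ℝ) * c.L) = (m:ℝ) * c.L := by ring
  have e2 : c.L - -((m:ℝ) * c.L) = (m:ℝ) * c.L + c.L := by ring
  rw [e1, e2] at h
  refine pck_congr h ?_
  intro w _
  show c.γ w = c.γ (w + -((m:ℝ) * c.L))
  have := c.per.sub_zsmul_eq (x := w) m
  rw [zsmul_eq_mul] at this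
  rw [show w + -((m:ℝ) * c.L) = w - (m:ℝ) * c.L by ring]
  exact this.symm

lemma pck_blocks (c : SCCurve) (m : ℤ) :
    ∀ N : ℕ, PiecewiseCkOn 2 c.γ ((m : ℝ) * c.L) ((m : ℝ) * c.L + (N : ℝ) * c.L)
  | 0 => ⟨0, fun _ => (m : ℝ) * c.L, rfl, by simp, fun i hi => absurd hi (by omega),
      fun i hi => absurd hi (by omega)⟩
  | (N+1) => by
    have h1 := pck_blocks c m N
    have h2 := pck_block c (m + N)
    have e : ((m + N : ℤ) : ℝ) * c.L = (m:ℝ) * c.L + (N:ℝ) * c.L := by push_cast; ring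
    rw [e] at h2
    have h3 := pck_concat h1 h2
    have e2 : (m:ℝ) * c.L + (N:ℝ) * c.L + c.L = (m:ℝ) * c.L + ((N+1 : ℕ) : ℝ) * c.L := by
      push_cast; ring
    rw [e2] at h3
    exact h3

lemma pck_window (c : SCCurve) {a b : ℝ} (hab : a < b) : PiecewiseCkOn 2 c.γ a b := by
  set m : ℤ := ⌊a / c.L⌋ with hm
  have hma : (m : ℝ) * c.L ≤ a := by
    have h1 : (m : ℝ) ≤ a / c.L := Int.floor_le _
    calc (m:ℝ) * c.L ≤ (a / c.L) * c.L := mul_le_mul_of_nonneg_right h1 c.hL.le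
      _ = a := div_mul_cancel₀ a c.hL.ne' 
  obtain ⟨N, hN⟩ := exists_nat_ge ((b - (m:ℝ) * c.L) / c.L)
  have hNb : b ≤ (m:ℝ) * c.L + (N:ℝ) * c.L := by
    have h2 : b - (m:ℝ) * c.L ≤ (N:ℝ) * c.L := by
      calc b - (m:ℝ) * c.L = ((b - (m:ℝ) * c.L) / c.L) * c.L :=
            (div_mul_cancel₀ _ c.hL.ne').symm
        _ ≤ (N:ℝ) * c.L := mul_le_mul_of_nonneg_right hN c.hL.le
    linarith
  have h := pck_blocks c m N
  have h2 := pck_restrict_left h hma (lt_of_lt_of_le hab hNb)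
  exact pck_restrict_right h2 hNb hab

/-! #### Finiteness of the length -/

lemma H1_piece_lt_top {γ : ℝ → Pt} {a b : ℝ} (h : ContDiffOn ℝ 1 γ (Icc a b)) :
    μH[1] (γ '' Icc a b) < ⊤ := by
  rcases le_or_gt b a with hba | hab
  · have hsub : γ '' Icc a b ⊆ {γ a} := by
      rintro y ⟨w, hw, rfl⟩
      have : w = a := le_antisymm (hw.2.trans hba) hw.1
      simp [this]
    refine lt_of_le_of_lt (measure_mono hsub) ?_
    haveI := MeasureTheory.Measure.noAtoms_hausdorff Pt one_pos
    simp
  · have hu : UniqueDiffOn ℝ (Icc a b) := uniqueDiffOn_Icc hab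
    have hcd : ContinuousOn (fderivWithin ℝ γ (Icc a b)) (Icc a b) :=
      h.continuousOn_fderivWithin hu le_rfl
    obtain ⟨C, hC⟩ := isCompact_Icc.exists_bound_of_continuousOn hcd
    set C' : NNReal := ⟨max C 0, le_max_right _ _⟩ with hC'
    have hb' : ∀ x ∈ Icc a b, ‖fderivWithin ℝ γ (Icc a b) x‖₊ ≤ C' := by
      intro x hx
      have h1 : ‖fderivWithin ℝ γ (Icc a b) x‖ ≤ max C 0 := le_trans (hC x hx) (le_max_left _ _)
      exact_mod_cast h1
    have hlip : LipschitzOnWith C' γ (Icc a b) :=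
      Convex.lipschitzOnWith_of_nnnorm_fderivWithin_le (h.differentiableOn one_ne_zero) hb' (convex_Icc a b)
    calc μH[1] (γ '' Icc a b) ≤ (C' : ℝ≥0∞) ^ (1:ℝ) * μH[1] (Icc a b) :=
          hlip.hausdorffMeasure_image_le zero_le_one
      _ < ⊤ := by
          rw [ENNReal.rpow_one, h1_Icc]
          exact ENNReal.mul_lt_top ENNReal.coe_lt_top ENNReal.ofReal_lt_top

lemma H1_image_Icc_lt_top (c : SCCurve) (a b : ℝ) : μH[1] (c.γ '' Icc a b) < ⊤ := by
  rcases le_or_gt b a with hba | hab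
  · have hsub : c.γ '' Icc a b ⊆ {c.γ a} := by
      rintro y ⟨w, hw, rfl⟩
      have : w = a := le_antisymm (hw.2.trans hba) hw.1
      simp [this]
    refine lt_of_le_of_lt (measure_mono hsub) ?_
    haveI := MeasureTheory.Measure.noAtoms_hausdorff Pt one_pos
    simp
  · obtain ⟨n, t, h0, hn, hlt, hc⟩ := pck_window c hab
    have hn1 : 1 ≤ n := by
      rcases Nat.eq_zero_or_pos n with rfl | h
      · exfalso; rw [← h0] at hab; rw [hn] at hab; exact lt_irrefl _ hab
      · exact h
    have hcover : c.γ '' Icc a b ⊆ ⋃ i ∈ Finset.range n, c.γ '' Icc (t i) (t (i+1)) := by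
      rintro y ⟨w, hw, rfl⟩
      obtain ⟨i, hi, hmem⟩ := pck_cover hlt hn1 w (by rw [h0, hn]; exact hw)
      exact mem_biUnion (Finset.mem_range.mpr hi) ⟨w, hmem, rfl⟩
    refine lt_of_le_of_lt (measure_mono hcover)
      (lt_of_le_of_lt (measure_biUnion_finset_le _ _) ?_)
    refine ENNReal.sum_lt_top.mpr fun i hi => ?_
    refine H1_piece_lt_top ((hc i (Finset.mem_range.mp hi)).of_le ?_)
    norm_num

lemma H1_curve_lt_top (c : SCCurve) : μH[1] c.image < ⊤ := by
  rw [image_window c 0]; exact H1_image_Icc_lt_top c 0 (0 + c.L)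

/-! #### Contour bundle basics -/

lemma eps_finite (L : ContourBundle) : L.eps.Finite := by
  apply Set.finite_iUnion
  intro i
  exact (Set.finite_singleton (L.ep2 i)).insert (L.ep1 i)

lemma eps_closed (L : ContourBundle) : IsClosed L.eps :=
  (eps_finite L).isClosed

lemma eps_subset_carrier (L : ContourBundle) : L.eps ⊆ L.carrier := by
  rintro y hy
  simp only [ContourBundle.eps, mem_iUnion] at hy
  obtain ⟨i, hi⟩ := hy
  obtain ⟨hne, g, hgc, hginj, hgpc, hgim, hg0, hg1⟩ := L.harc i
  refine mem_iUnion.mpr ⟨i, ?_⟩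
  rcases hi with h | h
  · rw [h, ← hg0, ← hgim]; exact ⟨0, by norm_num, rfl⟩
  · rw [mem_singleton_iff.mp h, ← hg1, ← hgim]; exact ⟨1, by norm_num, rfl⟩

lemma carrier_closed (L : ContourBundle) : IsClosed L.carrier :=
  isClosed_iUnion_of_finite fun i => (L.hcompact i).isClosed

/-! #### Energy comparison -/

lemma ereal_coe_of_ne_top {x : ℝ≥0∞} (hx : x ≠ ⊤) :
    ((x : ℝ≥0∞) : EReal) = ((x.toReal : ℝ) : EReal) := by
  conv_lhs => rw [← ENNReal.ofReal_toReal hx]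
  rw [EReal.coe_ennreal_ofReal, max_eq_left ENNReal.toReal_nonneg]

lemma ec_le_imp {L : ContourBundle} {α β : ℝ} (hβ : 0 < β) {Γ Γ' : Set Pt}
    (hcard : Γ ∩ L.eps = Γ' ∩ L.eps) (h : Ec L α β Γ ≤ Ec L α β Γ') :
    μH[1] Γ ≤ μH[1] Γ' := by
  unfold Ec at h
  rw [hcard] at h
  have hAreal : (α : EReal) * (((Γ' ∩ L.eps).ncard : ℝ) : EReal)
      = ((α * ((Γ' ∩ L.eps).ncard : ℝ) : ℝ) : EReal) := by
    rw [EReal.coe_mul]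
  rw [hAreal] at h
  have h2 : (β : EReal) * ((μH[1] Γ : ℝ≥0∞) : EReal)
      ≤ (β : EReal) * ((μH[1] Γ' : ℝ≥0∞) : EReal) := by
    have h3 := add_le_add_right h ((α * ((Γ' ∩ L.eps).ncard : ℝ) : ℝ) : EReal)
    rwa [add_comm _ (_ - _), add_comm _ (_ - _), EReal.sub_add_cancel, EReal.sub_add_cancel] at h3
  by_cases htop : μH[1] Γ' = ⊤
  · simp [htop]
  · have hΓtop : μH[1] Γ ≠ ⊤ := by
      intro hT
      rw [hT, EReal.coe_ennreal_top, EReal.coe_mul_top_of_pos hβ] at h2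
      have hYtop : (β : EReal) * ((μH[1] Γ' : ℝ≥0∞) : EReal) = ⊤ := top_le_iff.mp h2
      rw [ereal_coe_of_ne_top htop, ← EReal.coe_mul] at hYtop
      exact (EReal.coe_ne_top _) hYtop
    rw [ereal_coe_of_ne_top htop, ereal_coe_of_ne_top hΓtop, ← EReal.coe_mul,
      ← EReal.coe_mul, EReal.coe_le_coe_iff] at h2
    have h4 := le_of_mul_le_mul_left h2 hβ
    exact (ENNReal.toReal_le_toReal hΓtop htop).mp h4

/-! #### The competitor curve -/

lemma competitor (c : SCCurve) {u v : ℝ} (huv : u < v) (hvT : v < u + c.L)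
    (hne : c.γ u ≠ c.γ v)
    (hsep : ∀ w ∈ Ioo v (u + c.L), c.γ w ∉ segment ℝ (c.γ u) (c.γ v)) :
    IsSimpleClosedCurve (segment ℝ (c.γ u) (c.γ v) ∪ c.γ '' Icc v (u + c.L)) := by
  classical
  haveI : Fact (0 < c.L) := ⟨c.hL⟩
  set T := c.L with hT
  set p := c.γ u with hp
  set q := c.γ v with hq
  set A : ℝ → Pt := fun w => p + ((w - u) / (v - u)) • (q - p) with hA
  have hvu : (0:ℝ) < v - u := by linarith
  have hAu : A u = p := by rw [hA]; dsimp only; simp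
  have hAv : A v = q := by
    rw [hA]; dsimp only
    rw [div_self hvu.ne']
    simp
  have hAsmooth : ContDiff ℝ 2 A := by
    apply contDiff_const.add
    exact ContDiff.smul ((contDiff_id.sub contDiff_const).div_const _) contDiff_const
  have hAcont : Continuous A := hAsmooth.continuous
  have hAmem : ∀ w ∈ Icc u v, A w ∈ segment ℝ p q := by
    intro w hw
    rw [segment_eq_image']
    exact ⟨(w - u)/(v - u), ⟨div_nonneg (by linarith [hw.1]) hvu.le,
      by rw [div_le_one hvu]; linarith [hw.2]⟩, rfl⟩
  have hAsurj : segment ℝ p q ⊆ A '' Icc u v := by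
    intro y hy
    rw [segment_eq_image'] at hy
    obtain ⟨τ, hτ, rfl⟩ := hy
    refine ⟨u + τ * (v - u), ⟨by nlinarith [hτ.1], by nlinarith [hτ.2]⟩, ?_⟩
    rw [hA]; dsimp only
    have e : (u + τ * (v - u) - u)/(v - u) = τ := by
      field_simp
      ring
    rw [e]
  have hqpne : q - p ≠ 0 := sub_ne_zero.mpr (Ne.symm hne)
  have hAinj : ∀ w₁ ∈ Icc u v, ∀ w₂ ∈ Icc u v, A w₁ = A w₂ → w₁ = w₂ := by
    intro w₁ _ w₂ _ he
    rw [hA] at he; dsimp only at he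
    have h2 := add_left_cancel he
    have h4 : ((w₁ - u)/(v - u) - (w₂ - u)/(v - u)) • (q - p) = 0 := by
      rw [sub_smul, h2, sub_self]
    rcases smul_eq_zero.mp h4 with h5 | h5
    · rw [div_sub_div_same, div_eq_zero_iff] at h5
      rcases h5 with h6 | h6
      · linarith
      · linarith
    · exact absurd h5 hqpne
  set f : ℝ → Pt := fun w => if w ≤ v then A w else c.γ w with hf
  have hfA : ∀ w, w ≤ v → f w = A w := fun w hw => if_pos hw
  have hfγ : ∀ w, v < w → f w = c.γ w := fun w hw => if_neg (not_le.mpr hw)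
  have hfv : f v = c.γ v := by rw [hfA v le_rfl, hAv]
  have hfcont : Continuous f := by
    rw [hf]
    exact Continuous.if_le hAcont c.cont continuous_id continuous_const
      (fun w hw => by rw [hw, hAv, hq])
  have hfu : f u = p := by rw [hfA u huv.le, hAu]
  have hfuT : f (u + T) = p := by
    rw [hfγ (u + T) hvT, hp, hT]
    exact c.per u
  set g : ℝ → Pt := fun w => AddCircle.liftIco T u f ((w + u : ℝ) : AddCircle T) with hg
  have hgcont : Continuous g := by
    have hlift : Continuous (AddCircle.liftIco T u f) :=
      AddCircle.liftIco_continuous (by rw [hfu, hfuT]) (hfcont.continuousOn)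
    have hcoe : Continuous (fun w : ℝ => ((w + u : ℝ) : AddCircle T)) :=
      (AddCircle.continuous_mk' T).comp (continuous_id.add continuous_const)
    exact hlift.comp hcoe
  have hgper : Function.Periodic g T := by
    intro w
    rw [hg]; dsimp only
    congr 1
    rw [show w + T + u = (w + u) + T by ring]
    exact AddCircle.coe_add_period T (w + u)
  have hgval : ∀ w ∈ Ico 0 T, g w = f (w + u) := by
    intro w hw
    rw [hg]; dsimp only
    exact AddCircle.liftIco_coe_apply ⟨by linarith [hw.1], by linarith [hw.2]⟩
  have hfinj : ∀ w₁ ∈ Ico u (u + T), ∀ w₂ ∈ Ico u (u + T), f w₁ = f w₂ → w₁ = w₂ := by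
    intro w₁ h₁ w₂ h₂ he
    by_cases hc₁ : w₁ ≤ v <;> by_cases hc₂ : w₂ ≤ v
    · rw [hfA w₁ hc₁, hfA w₂ hc₂] at he
      exact hAinj w₁ ⟨h₁.1, hc₁⟩ w₂ ⟨h₂.1, hc₂⟩ he
    · exfalso
      rw [hfA w₁ hc₁, hfγ w₂ (not_le.mp hc₂)] at he
      exact hsep w₂ ⟨not_le.mp hc₂, h₂.2⟩ (he ▸ hAmem w₁ ⟨h₁.1, hc₁⟩)
    · exfalso
      rw [hfγ w₁ (not_le.mp hc₁), hfA w₂ hc₂] at he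
      exact hsep w₁ ⟨not_le.mp hc₁, h₁.2⟩ (he.symm ▸ hAmem w₂ ⟨h₂.1, hc₂⟩)
    · rw [hfγ w₁ (not_le.mp hc₁), hfγ w₂ (not_le.mp hc₂)] at he
      exact injOn_window c u h₁ h₂ he
  refine ⟨⟨T, c.hL, g, hgcont, hgper, ?_, ?_⟩, ?_⟩
  · intro w₁ h₁ w₂ h₂ he
    rw [hgval w₁ h₁, hgval w₂ h₂] at he
    have := hfinj (w₁ + u) ⟨by linarith [h₁.1], by linarith [h₁.2]⟩
      (w₂ + u) ⟨by linarith [h₂.1], by linarith [h₂.2]⟩ he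
    linarith
  · show PiecewiseCkOn 2 g 0 T
    have pcf : PiecewiseCkOn 2 f u (u + T) := by
      apply pck_concat (b := v)
      · have hApc : PiecewiseCkOn 2 A u v := by
          refine ⟨1, fun i => if i = 0 then u else v, by simp, by simp, ?_, ?_⟩
          · intro i hi
            have hi0 : i = 0 := by omega
            subst hi0
            simp only [if_pos rfl, if_neg (by omega : ¬ ((0:ℕ)+1 = 0))]
            exact huv
          · intro i hi
            have hi0 : i = 0 := by omega
            subst hi0
            simp only [if_pos rfl, if_neg (by omega : ¬ ((0:ℕ)+1 = 0))]
            exact hAsmooth.contDiffOn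
        exact pck_congr hApc (fun w hw => hfA w hw.2)
      · refine pck_congr (pck_window c (by linarith : v < u + c.L)) ?_
        intro w hw
        rcases eq_or_lt_of_le hw.1 with heq | hlt
        · rw [← heq, hfv]
        · rw [hfγ w hlt]
    have pcshift := pck_shift u pcf
    have e1 : u - u = 0 := by ring
    have e2 : u + T - u = T := by ring
    rw [e1, e2] at pcshift
    refine pck_congr pcshift ?_
    intro w hw
    show g w = f (w + u)
    rcases eq_or_lt_of_le hw.2 with heq | hlt
    · have hgT0 : g T = g 0 := by
        have h0 := hgper 0
        rw [zero_add] at h0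
        exact h0
      rw [← heq] at hgT0
      rw [hgT0, hgval 0 ⟨le_rfl, c.hL⟩, zero_add, hfu]
      rw [show w + u = u + T by rw [heq]; ring, hfuT]
    · exact hgval w ⟨hw.1, hlt⟩
  · show Set.range g = _
    apply Subset.antisymm
    · rintro y ⟨w, rfl⟩
      have hred : ∃ w' ∈ Ico (0:ℝ) T, g w' = g w := by
        refine ⟨toIcoMod c.hL 0 w, by simpa using toIcoMod_mem_Ico c.hL 0 w, ?_⟩
        rw [show toIcoMod c.hL 0 w = w - toIcoDiv c.hL 0 w • T from rfl]
        exact hgper.sub_zsmul_eq _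
      obtain ⟨w', hw', he⟩ := hred
      rw [← he, hgval w' hw']
      set x := w' + u with hx
      have hxm : x ∈ Ico u (u + T) := ⟨by linarith [hw'.1], by linarith [hw'.2]⟩
      by_cases hc : x ≤ v
      · rw [hfA x hc]
        exact Or.inl (hAmem x ⟨hxm.1, hc⟩)
      · rw [hfγ x (not_le.mp hc)]
        exact Or.inr ⟨x, ⟨(not_le.mp hc).le, hxm.2.le⟩, rfl⟩
    · rintro y (hy | ⟨w, hw, rfl⟩)
      · obtain ⟨x, hx, rfl⟩ := hAsurj hy
        refine ⟨x - u, ?_⟩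
        rw [hgval (x-u) ⟨by linarith [hx.1], by linarith [hx.2]⟩, sub_add_cancel, hfA x hx.2]
      · rcases eq_or_lt_of_le hw.2 with heq | hlt
        · refine ⟨0, ?_⟩
          have h1 : g 0 = p := by rw [hgval 0 ⟨le_rfl, c.hL⟩, zero_add, hfu]
          rw [h1, hp, heq]
          exact (c.per u).symm
        · rcases eq_or_lt_of_le hw.1 with heqv | hgtv
          · refine ⟨v - u, ?_⟩
            rw [hgval (v-u) ⟨by linarith, by linarith⟩, sub_add_cancel, hfv, ← heqv]
          · refine ⟨w - u, ?_⟩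
            rw [hgval (w-u) ⟨by linarith [hw.1], by linarith⟩, sub_add_cancel, hfγ w hgtv]

/-! #### Surgery: the local energy comparison -/

lemma arc_measure_le {L : ContourBundle} {α β ε : ℝ} (hβ : 0 < β) (c : SCCurve)
    (hadm : AdmissibleC L c.image)
    (hmin : ∀ Γ', AdmissibleC L Γ' → Metric.hausdorffDist c.image Γ' < ε →
      Ec L α β c.image ≤ Ec L α β Γ')
    {u v : ℝ} (huv : u < v) (hvT : v < u + c.L) (hne : c.γ u ≠ c.γ v)
    {x : Pt} {r : ℝ} (hr : 0 < r) (hrε : 2 * r < ε)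
    (hKball : c.γ '' Icc u v ⊆ closedBall x r)
    (hLball : ∀ y ∈ closedBall x r, y ∉ L.carrier)
    (hsep : ∀ w ∈ Ioo v (u + c.L), c.γ w ∉ segment ℝ (c.γ u) (c.γ v)) :
    μH[1] (c.γ '' Icc u v) ≤ edist (c.γ u) (c.γ v) := by
  have hT := c.hL
  set T := c.L with hTdef
  set S := segment ℝ (c.γ u) (c.γ v) with hSdef
  set R := c.γ '' Icc v (u + T) with hRdef
  set Kuv := c.γ '' Icc u v with hKdef
  have hguv : c.γ u ∈ closedBall x r := hKball ⟨u, ⟨le_rfl, huv.le⟩, rfl⟩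
  have hgvv : c.γ v ∈ closedBall x r := hKball ⟨v, ⟨huv.le, le_rfl⟩, rfl⟩
  have hSball : S ⊆ closedBall x r := (convex_closedBall x r).segment_subset hguv hgvv
  have hΓ : c.image = Kuv ∪ R := by
    rw [image_window c u, hKdef, hRdef, ← image_union,
      Icc_union_Icc_eq_Icc huv.le (by linarith : v ≤ u + T)]
  have hscc := competitor c huv hvT hne hsep
  have hadm' : AdmissibleC L (S ∪ R) := by
    refine ⟨hscc, ?_⟩
    rw [Set.eq_empty_iff_forall_notMem]
    rintro y ⟨(hy | hy), hyinn⟩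
    · exact hLball y (hSball hy) hyinn.1
    · have hyim : y ∈ c.image := by rw [hΓ]; exact Or.inr hy
      have h2 := hadm.2
      rw [Set.eq_empty_iff_forall_notMem] at h2
      exact h2 y ⟨hyim, hyinn⟩
  have hdist : Metric.hausdorffDist c.image (S ∪ R) < ε := by
    have hb : Metric.hausdorffDist c.image (S ∪ R) ≤ 2 * r := by
      apply Metric.hausdorffDist_le_of_mem_dist (by linarith)
      · intro y hy
        rw [hΓ] at hy
        rcases hy with hy | hy
        · refine ⟨c.γ u, Or.inl (left_mem_segment ℝ _ _), ?_⟩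
          have h1 := hKball hy
          calc dist y (c.γ u) ≤ dist y x + dist x (c.γ u) := dist_triangle _ _ _
            _ ≤ r + r := add_le_add (mem_closedBall.mp h1)
                (by rw [dist_comm]; exact mem_closedBall.mp hguv)
            _ = 2 * r := by ring
        · exact ⟨y, Or.inr hy, by simp; positivity⟩
      · intro y hy
        rcases hy with hy | hy
        · refine ⟨c.γ u, by rw [hΓ]; exact Or.inl ⟨u, ⟨le_rfl, huv.le⟩, rfl⟩, ?_⟩
          have h1 := hSball hy
          calc dist y (c.γ u) ≤ dist y x + dist x (c.γ u) := dist_triangle _ _ _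
            _ ≤ r + r := add_le_add (mem_closedBall.mp h1)
                (by rw [dist_comm]; exact mem_closedBall.mp hguv)
            _ = 2 * r := by ring
        · exact ⟨y, by rw [hΓ]; exact Or.inr hy, by simp; positivity⟩
    linarith
  have hEc := hmin (S ∪ R) hadm' hdist
  have hcard : c.image ∩ L.eps = (S ∪ R) ∩ L.eps := by
    rw [hΓ]
    ext y
    simp only [mem_inter_iff, mem_union]
    constructor
    · rintro ⟨hy | hy, hyeps⟩
      · exact absurd (eps_subset_carrier L hyeps) (hLball y (hKball hy))
      · exact ⟨Or.inr hy, hyeps⟩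
    · rintro ⟨hy | hy, hyeps⟩
      · exact absurd (eps_subset_carrier L hyeps) (hLball y (hSball hy))
      · exact ⟨Or.inr hy, hyeps⟩
  have hμ : μH[1] c.image ≤ μH[1] (S ∪ R) := ec_le_imp hβ hcard hEc
  haveI := MeasureTheory.Measure.noAtoms_hausdorff Pt one_pos
  have hRmeas : MeasurableSet R := (isCompact_Icc.image c.cont).measurableSet
  have hKR : μH[1] (Kuv ∩ R) = 0 := by
    have hsub : Kuv ∩ R ⊆ {c.γ u} ∪ {c.γ v} := by
      rintro y ⟨⟨w₁, hw₁, rfl⟩, ⟨w₂, hw₂, he⟩⟩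
      rcases eq_or_lt_of_le hw₂.2 with heq | hlt
      · left
        rw [mem_singleton_iff, ← he, heq]
        exact c.per u
      · have h1 : w₁ ∈ Ico u (u + T) := ⟨hw₁.1, by linarith [hw₁.2]⟩
        have h2 : w₂ ∈ Ico u (u + T) := ⟨by linarith [hw₂.1], hlt⟩
        have hww : w₂ = w₁ := injOn_window c u h2 h1 he
        right
        rw [mem_singleton_iff]
        have hwv : w₁ = v := le_antisymm hw₁.2 (by rw [← hww]; exact hw₂.1)
        rw [hwv]
    refine le_antisymm (le_trans (measure_mono hsub) ?_) (zero_le)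
    refine le_trans (measure_union_le _ _) ?_
    simp [measure_singleton]
  have hsplitΓ : μH[1] c.image = μH[1] Kuv + μH[1] R := by
    rw [hΓ]
    have h1 : Kuv ∪ R = (Kuv \ R) ∪ R := by rw [diff_union_self]
    rw [h1, measure_union disjoint_sdiff_left hRmeas, measure_diff_null' hKR]
  have hμ' : μH[1] (S ∪ R) ≤ edist (c.γ u) (c.γ v) + μH[1] R := by
    refine le_trans (measure_union_le _ _) ?_
    rw [hSdef, MeasureTheory.hausdorffMeasure_segment]
  have hRfin : μH[1] R < ⊤ := H1_image_Icc_lt_top c v (u + T)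
  have hfinal : μH[1] Kuv + μH[1] R ≤ edist (c.γ u) (c.γ v) + μH[1] R := by
    rw [← hsplitΓ]
    exact le_trans hμ hμ'
  exact (ENNReal.add_le_add_iff_right hRfin.ne).mp hfinal

lemma local_straight {L : ContourBundle} {α β ε : ℝ} (hβ : 0 < β) (hε : 0 < ε) (c : SCCurve)
    (hadm : AdmissibleC L c.image)
    (hmin : ∀ Γ', AdmissibleC L Γ' → Metric.hausdorffDist c.image Γ' < ε →
      Ec L α β c.image ≤ Ec L α β Γ')
    {w₀ : ℝ} (hxL : c.γ w₀ ∉ L.carrier) {θ : ℝ} (hθ : 0 < θ) :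
    ∃ u v, u < w₀ ∧ w₀ < v ∧ v - u < θ ∧ c.γ '' Icc u v = segment ℝ (c.γ u) (c.γ v) := by
  have hT := c.hL
  set T := c.L with hTdef
  set x := c.γ w₀ with hx
  set η := min (θ/4) (T/8) with hη
  have hηpos : 0 < η := lt_min (by linarith) (by linarith)
  have hηθ : η ≤ θ/4 := min_le_left _ _
  have hηT : η ≤ T/8 := min_le_right _ _
  have hwin : ∀ a : ℝ, ∀ w₁ ∈ Ico a (a + T), ∀ w₂ ∈ Ico a (a + T), w₁ ≠ w₂ →
      c.γ w₁ ≠ c.γ w₂ :=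
    fun a w₁ h1 w₂ h2 hne he => hne (injOn_window c a h1 h2 he)
  set Kfar := c.γ '' Icc (w₀ + η) (w₀ + T - η) with hKfar
  have hKfarc : IsCompact Kfar := isCompact_Icc.image c.cont
  have hKfarne : Kfar.Nonempty := ⟨c.γ (w₀ + η), ⟨w₀ + η, ⟨le_rfl, by linarith⟩, rfl⟩⟩
  have hxKfar : x ∉ Kfar := by
    rintro ⟨w, hw, he⟩
    have hwne : w ≠ w₀ := by intro hh; rw [hh] at hw; linarith [hw.1]
    exact hwin w₀ w ⟨by linarith [hw.1], by linarith [hw.2]⟩ w₀ ⟨le_rfl, by linarith⟩ hwne he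
  set d₁ := Metric.infDist x Kfar with hd₁
  have hd₁pos : 0 < d₁ := (hKfarc.isClosed.notMem_iff_infDist_pos hKfarne).mp hxKfar
  obtain ⟨r₀, hr₀pos, hr₀⟩ : ∃ r₀ > 0, ∀ y ∈ closedBall x r₀, y ∉ L.carrier := by
    rcases eq_empty_or_nonempty L.carrier with hc0 | hc0
    · exact ⟨1, one_pos, fun y _ hy => by rw [hc0] at hy; exact hy⟩
    · have hpos := ((carrier_closed L).notMem_iff_infDist_pos hc0).mp hxL
      refine ⟨Metric.infDist x L.carrier / 2, by linarith, ?_⟩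
      intro y hy hyc
      have h1 : Metric.infDist x L.carrier ≤ dist x y := Metric.infDist_le_dist_of_mem hyc
      have h2 : dist x y ≤ Metric.infDist x L.carrier / 2 := by
        rw [dist_comm]; exact mem_closedBall.mp hy
      linarith
  set r := min (min (d₁/2) r₀) (min (ε/4) 1) with hr
  have hrpos : 0 < r := lt_min (lt_min (by linarith) hr₀pos) (lt_min (by linarith) one_pos)
  have hrd₁ : r ≤ d₁/2 := le_trans (min_le_left _ _) (min_le_left _ _)
  have hrr₀ : r ≤ r₀ := le_trans (min_le_left _ _) (min_le_right _ _)
  have hrε : 2 * r < ε := by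
    have h1 : r ≤ ε/4 := le_trans (min_le_right _ _) (min_le_left _ _)
    linarith
  obtain ⟨δ₀, hδ₀pos, hδ₀⟩ := Metric.continuousAt_iff.mp (c.cont.continuousAt (x := w₀))
    (r/2) (by linarith)
  set δ := min (δ₀/2) η with hδ
  have hδpos : 0 < δ := lt_min (by linarith) hηpos
  have hδη : δ ≤ η := min_le_right _ _
  have hδball : ∀ w, |w - w₀| ≤ δ → c.γ w ∈ closedBall x (r/2) := by
    intro w hw
    have h1 : dist w w₀ < δ₀ := by
      rw [Real.dist_eq]
      have h2 : δ ≤ δ₀/2 := min_le_left _ _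
      calc |w - w₀| ≤ δ := hw
        _ < δ₀ := by linarith
    rw [mem_closedBall, hx]
    exact (hδ₀ h1).le
  set Far2 := c.γ '' (Icc (w₀ - η) (w₀ + η) \ Ioo (w₀ - δ) (w₀ + δ)) with hFar2
  have hFar2c : IsCompact Far2 := (isCompact_Icc.diff isOpen_Ioo).image c.cont
  have hFar2ne : Far2.Nonempty := by
    refine ⟨c.γ (w₀ - η), ⟨w₀ - η, ⟨⟨le_rfl, by linarith⟩, ?_⟩, rfl⟩⟩
    intro hcon
    have := hcon.1
    linarith
  have hxFar2 : x ∉ Far2 := by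
    rintro ⟨w, ⟨hw1, hw2⟩, he⟩
    have hwne : w ≠ w₀ := by
      intro hh
      exact hw2 (by rw [hh]; exact ⟨by linarith, by linarith⟩)
    exact hwin (w₀ - η) w ⟨hw1.1, by linarith [hw1.2]⟩ w₀ ⟨by linarith, by linarith⟩ hwne he
  set d₂ := Metric.infDist x Far2 with hd₂
  have hd₂pos : 0 < d₂ := (hFar2c.isClosed.notMem_iff_infDist_pos hFar2ne).mp hxFar2
  set ρ := min (r/2) (d₂/2) with hρ
  have hρpos : 0 < ρ := lt_min (by linarith) (by linarith)
  have hρr : ρ ≤ r/2 := min_le_left _ _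
  have hρd₂ : ρ ≤ d₂/2 := min_le_right _ _
  set V := Icc (w₀ - δ) (w₀ + δ) ∩ c.γ ⁻¹' (closedBall x ρ) with hV
  have hVc : IsCompact V := isCompact_Icc.of_isClosed_subset
    (isClosed_Icc.inter ((isClosed_closedBall).preimage c.cont)) inter_subset_left
  have hVne : V.Nonempty := by
    refine ⟨w₀, ⟨by linarith, by linarith⟩, ?_⟩
    simp only [mem_preimage, mem_closedBall, hx, dist_self]
    exact hρpos.le
  set u := sInf V with hu
  set v := sSup V with hv
  have huV : u ∈ V := hVc.sInf_mem hVne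
  have hvV : v ∈ V := hVc.sSup_mem hVne
  obtain ⟨δ₂0, hδ₂0pos, hδ₂0⟩ := Metric.continuousAt_iff.mp (c.cont.continuousAt (x := w₀))
    ρ hρpos
  set δ₂ := min (δ₂0/2) δ with hδ₂
  have hδ₂pos : 0 < δ₂ := lt_min (by linarith) hδpos
  have hδ₂mem : ∀ w, |w - w₀| ≤ δ₂ → w ∈ V := by
    intro w hw
    have h1 : dist w w₀ < δ₂0 := by
      rw [Real.dist_eq]
      have h2 : δ₂ ≤ δ₂0/2 := min_le_left _ _
      calc |w - w₀| ≤ δ₂ := hw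
        _ < δ₂0 := by linarith
    have h2 : |w - w₀| ≤ δ := le_trans hw (min_le_right _ _)
    rw [abs_le] at h2
    refine ⟨⟨by linarith [h2.1], by linarith [h2.2]⟩, ?_⟩
    simp only [mem_preimage, mem_closedBall, hx]
    exact (hδ₂0 h1).le
  have hulow : u ≤ w₀ - δ₂ := csInf_le hVc.bddBelow
    (hδ₂mem (w₀ - δ₂) (by rw [show w₀ - δ₂ - w₀ = -δ₂ by ring, abs_neg, abs_of_pos hδ₂pos]))
  have hvhigh : w₀ + δ₂ ≤ v := le_csSup hVc.bddAbove
    (hδ₂mem (w₀ + δ₂) (by rw [show w₀ + δ₂ - w₀ = δ₂ by ring, abs_of_pos hδ₂pos]))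
  have huw₀ : u < w₀ := by linarith
  have hw₀v : w₀ < v := by linarith
  have hVsub : V ⊆ Icc (w₀ - δ) (w₀ + δ) := inter_subset_left
  have huδ : u ∈ Icc (w₀ - δ) (w₀ + δ) := hVsub huV
  have hvδ : v ∈ Icc (w₀ - δ) (w₀ + δ) := hVsub hvV
  have hvuT : v < u + T := by
    have h1 := huδ.1
    have h2 := hvδ.2
    linarith
  have hstar : ∀ w ∈ Ico u (u + T), c.γ w ∈ closedBall x ρ → w ∈ Icc u v := by
    intro w hwIco hwball
    obtain ⟨w', hw'mem, hw'eq⟩ := reduce c w₀ w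
    have hnotfar : c.γ w' ∉ Kfar := by
      intro hmem
      have h1 : d₁ ≤ dist x (c.γ w') := Metric.infDist_le_dist_of_mem hmem
      have h2 : dist x (c.γ w') ≤ ρ := by
        rw [hw'eq, dist_comm]
        exact mem_closedBall.mp hwball
      linarith
    have hw'' : ∃ w'' ∈ Ioo (w₀ - η) (w₀ + η), c.γ w'' = c.γ w := by
      rcases lt_or_ge w' (w₀ + η) with h | h
      · exact ⟨w', ⟨by linarith [hw'mem.1], h⟩, hw'eq⟩
      · refine ⟨w' - T, ⟨?_, ?_⟩, ?_⟩
        · by_contra hcon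
          push_neg at hcon
          exact hnotfar ⟨w', ⟨h, by linarith⟩, rfl⟩
        · linarith [hw'mem.2]
        · rw [← hw'eq]
          have hper := c.per (w' - T)
          rw [sub_add_cancel] at hper
          exact hper.symm
    obtain ⟨w'', hw''mem, hw''eq⟩ := hw''
    have hw''V : w'' ∈ V := by
      have hball : c.γ w'' ∈ closedBall x ρ := by rw [hw''eq]; exact hwball
      by_cases hio : w'' ∈ Ioo (w₀ - δ) (w₀ + δ)
      · exact ⟨⟨hio.1.le, hio.2.le⟩, hball⟩
      · exfalso
        have hmem2 : c.γ w'' ∈ Far2 := ⟨w'', ⟨⟨hw''mem.1.le, hw''mem.2.le⟩, hio⟩, rfl⟩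
        have h1 : d₂ ≤ dist x (c.γ w'') := Metric.infDist_le_dist_of_mem hmem2
        have h2 : dist x (c.γ w'') ≤ ρ := by
          rw [dist_comm]; exact mem_closedBall.mp hball
        linarith
    have huw'' : u ≤ w'' := csInf_le hVc.bddBelow hw''V
    have hw''v : w'' ≤ v := le_csSup hVc.bddAbove hw''V
    have hw''Ico : w'' ∈ Ico u (u + T) := ⟨huw'', by linarith⟩
    have heqw : w = w'' := by
      by_contra hne2
      exact hwin u w hwIco w'' hw''Ico hne2 (by rw [hw''eq])
    rw [heqw]
    exact ⟨huw'', hw''v⟩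
  have huball : c.γ u ∈ closedBall x ρ := huV.2
  have hvball : c.γ v ∈ closedBall x ρ := hvV.2
  have hne : c.γ u ≠ c.γ v :=
    hwin u u ⟨le_rfl, by linarith⟩ v ⟨by linarith, hvuT⟩ (by intro hh; linarith [huw₀, hw₀v])
  have hsep : ∀ w ∈ Ioo v (u + T), c.γ w ∉ segment ℝ (c.γ u) (c.γ v) := by
    intro w hw hmem
    have hsegsub : segment ℝ (c.γ u) (c.γ v) ⊆ closedBall x ρ :=
      (convex_closedBall x ρ).segment_subset huball hvball
    have h1 := hstar w ⟨by linarith [hw.1], hw.2⟩ (hsegsub hmem)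
    linarith [hw.1, h1.2]
  have hKball : c.γ '' Icc u v ⊆ closedBall x r := by
    rintro y ⟨w, hw, rfl⟩
    have h1 : |w - w₀| ≤ δ := by
      rw [abs_le]
      exact ⟨by linarith [huδ.1, hw.1], by linarith [hvδ.2, hw.2]⟩
    exact closedBall_subset_closedBall (by linarith) (hδball w h1)
  have hLball : ∀ y ∈ closedBall x r, y ∉ L.carrier := fun y hy =>
    hr₀ y (closedBall_subset_closedBall hrr₀ hy)
  have hmeas := arc_measure_le hβ c hadm hmin (huw₀.trans hw₀v) hvuT hne hrpos hrε
    hKball hLball hsep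
  have hseg := eq_segment_of_H1_le (isCompact_Icc.image c.cont)
    ((isPreconnected_Icc).image _ (c.cont.continuousOn))
    ⟨u, ⟨le_rfl, by linarith⟩, rfl⟩ ⟨v, ⟨by linarith, le_rfl⟩, rfl⟩ hmeas
  refine ⟨u, v, huw₀, hw₀v, ?_, hseg⟩
  have h1 := huδ.1
  have h2 := hvδ.2
  linarith

/-! #### Local-to-global straightness -/

lemma straight_on (c : SCCurve) {s t : ℝ} (hts : t ≤ s + c.L)
    (hloc : ∀ w₀ ∈ Ioo s t, ∀ θ : ℝ, 0 < θ → ∃ u v, u < w₀ ∧ w₀ < v ∧ v - u < θ ∧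
      c.γ '' Icc u v = segment ℝ (c.γ u) (c.γ v))
    {s' t' : ℝ} (hs' : s < s') (hst' : s' ≤ t') (ht' : t' < t) :
    c.γ '' Icc s' t' = segment ℝ (c.γ s') (c.γ t') := by
  have hT := c.hL
  set T := c.L with hTdef
  haveI := MeasureTheory.Measure.noAtoms_hausdorff Pt one_pos
  set p := c.γ s' with hp
  have hconn : ∀ a b : ℝ, IsPreconnected (c.γ '' Icc a b) :=
    fun a b => (isPreconnected_Icc).image _ (c.cont.continuousOn)
  have hcpt : ∀ a b : ℝ, IsCompact (c.γ '' Icc a b) :=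
    fun a b => isCompact_Icc.image c.cont
  have hsplit : ∀ a b d : ℝ, a ≤ b → b ≤ d → d < a + T →
      μH[1] (c.γ '' Icc a d) = μH[1] (c.γ '' Icc a b) + μH[1] (c.γ '' Icc b d) := by
    intro a b d hab hbd hdT
    have hun : c.γ '' Icc a d = c.γ '' Icc a b ∪ c.γ '' Icc b d := by
      rw [← image_union, Icc_union_Icc_eq_Icc hab hbd]
    have hint : μH[1] (c.γ '' Icc a b ∩ c.γ '' Icc b d) = 0 := by
      have hsub : c.γ '' Icc a b ∩ c.γ '' Icc b d ⊆ {c.γ b} := by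
        rintro y ⟨⟨u1, hu1, rfl⟩, ⟨u2, hu2, he⟩⟩
        have h1 : u1 ∈ Ico a (a + T) := ⟨hu1.1, by linarith [hu1.2]⟩
        have h2 : u2 ∈ Ico a (a + T) := ⟨le_trans hab hu2.1, by linarith [hu2.2]⟩
        have heq := injOn_window c a h2 h1 he
        rw [mem_singleton_iff]
        have h3 : u1 = b := le_antisymm hu1.2 (by rw [← heq]; exact hu2.1)
        rw [h3]
      exact le_antisymm (le_trans (measure_mono hsub) (by simp)) (zero_le)
    have hkey := measure_union_add_inter (μ := μH[1]) (c.γ '' Icc a b)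
      ((hcpt b d).measurableSet)
    rw [hint, add_zero] at hkey
    rw [hun, hkey]
  set M := {w : ℝ | w ∈ Icc s' t' ∧ c.γ '' Icc s' w = segment ℝ p (c.γ w)} with hM
  have hs'M : s' ∈ M := by
    refine ⟨⟨le_rfl, hst'⟩, ?_⟩
    rw [Icc_self, image_singleton, segment_same]
  have hMne : M.Nonempty := ⟨s', hs'M⟩
  have hMbdd : BddAbove M := ⟨t', fun w hw => hw.1.2⟩
  set w₁ := sSup M with hw₁
  have hw₁mem : w₁ ∈ Icc s' t' := ⟨le_csSup hMbdd hs'M, csSup_le hMne (fun w hw => hw.1.2)⟩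
  have hw₁M : w₁ ∈ M := by
    by_cases hex : ∃ w ∈ M, w = w₁
    · obtain ⟨w, hw, rfl⟩ := hex
      exact hw
    · push_neg at hex
      have hlt : ∀ w ∈ M, w < w₁ := fun w hw => lt_of_le_of_ne (le_csSup hMbdd hw) (hex w hw)
      obtain ⟨seq, hmono, htend, hseqM⟩ := exists_seq_tendsto_sSup hMne hMbdd
      have hseqlt : ∀ n, seq n < w₁ := fun n => hlt _ (hseqM n)
      have hIcoU : Ico s' w₁ = ⋃ n, Icc s' (seq n) := by
        apply Subset.antisymm
        · intro w hw
          obtain ⟨n, hn⟩ := (htend.eventually (eventually_gt_nhds hw.2)).exists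
          exact mem_iUnion.mpr ⟨n, hw.1, hn.le⟩
        · intro w hw
          obtain ⟨n, hn⟩ := mem_iUnion.mp hw
          exact ⟨hn.1, lt_of_le_of_lt hn.2 (hseqlt n)⟩
      have hunion : c.γ '' Ico s' w₁ = ⋃ n, c.γ '' Icc s' (seq n) := by
        rw [hIcoU, image_iUnion]
      have hmono2 : Monotone (fun n => c.γ '' Icc s' (seq n)) := fun n m hnm =>
        image_mono (Icc_subset_Icc le_rfl (hmono hnm))
      have hμtend : Tendsto (fun n => μH[1] (c.γ '' Icc s' (seq n))) atTop
          (𝓝 (μH[1] (⋃ n, c.γ '' Icc s' (seq n)))) :=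
        tendsto_measure_iUnion_atTop hmono2
      have hvals : ∀ n, μH[1] (c.γ '' Icc s' (seq n)) = edist p (c.γ (seq n)) := by
        intro n
        rw [(hseqM n).2, MeasureTheory.hausdorffMeasure_segment]
      have hγtend : Tendsto (fun n => edist p (c.γ (seq n))) atTop (𝓝 (edist p (c.γ w₁))) :=
        Tendsto.edist tendsto_const_nhds ((c.cont.tendsto w₁).comp htend)
      have hIco : μH[1] (c.γ '' Ico s' w₁) = edist p (c.γ w₁) := by
        rw [hunion]
        exact tendsto_nhds_unique (hμtend.congr hvals) hγtend
      have hIcc : μH[1] (c.γ '' Icc s' w₁) ≤ edist p (c.γ w₁) := by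
        have hsub : c.γ '' Icc s' w₁ ⊆ c.γ '' Ico s' w₁ ∪ {c.γ w₁} := by
          rintro y ⟨w, hw, rfl⟩
          rcases eq_or_lt_of_le hw.2 with heq | hlt2
          · right
            rw [mem_singleton_iff, heq]
          · left
            exact ⟨w, ⟨hw.1, hlt2⟩, rfl⟩
        refine le_trans (measure_mono hsub) (le_trans (measure_union_le _ _) ?_)
        rw [hIco, measure_singleton, add_zero]
      have hseg := eq_segment_of_H1_le (hcpt s' w₁) (hconn s' w₁)
        ⟨s', ⟨le_rfl, hw₁mem.1⟩, rfl⟩ ⟨w₁, ⟨hw₁mem.1, le_rfl⟩, rfl⟩ hIcc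
      exact ⟨hw₁mem, hseg⟩
  rcases eq_or_lt_of_le hw₁mem.2 with heq | hlt
  · rw [← heq]
    exact hw₁M.2
  · exfalso
    have hw₁mid : w₁ ∈ Ioo s t := ⟨lt_of_lt_of_le hs' hw₁mem.1, lt_trans hlt ht'⟩
    rcases eq_or_lt_of_le hw₁mem.1 with heqs | hlts
    · -- w₁ = s'
      set θ := min (t' - w₁) (min (w₁ - s) T) with hθ
      have hθpos : 0 < θ := lt_min (by linarith) (lt_min (by linarith [hw₁mid.1]) hT)
      have hθ1 : θ ≤ t' - w₁ := min_le_left _ _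
      have hθT : θ ≤ T := le_trans (min_le_right _ _) (min_le_right _ _)
      obtain ⟨u, v, hu, hv, hlen, hseg2⟩ := hloc w₁ hw₁mid θ hθpos
      have hvle : v ≤ t' := by linarith
      have hvuT : v < u + T := by linarith
      have hsplituv := hsplit u w₁ v hu.le hv.le hvuT
      have htot : μH[1] (c.γ '' Icc u v) = edist (c.γ u) (c.γ v) := by
        rw [hseg2, MeasureTheory.hausdorffMeasure_segment]
      have hlb1 : edist (c.γ u) (c.γ w₁) ≤ μH[1] (c.γ '' Icc u w₁) :=
        edist_le_H1 (hconn u w₁) ⟨u, ⟨le_rfl, hu.le⟩, rfl⟩ ⟨w₁, ⟨hu.le, le_rfl⟩, rfl⟩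
      have hlb2 : edist (c.γ w₁) (c.γ v) ≤ μH[1] (c.γ '' Icc w₁ v) :=
        edist_le_H1 (hconn w₁ v) ⟨w₁, ⟨le_rfl, hv.le⟩, rfl⟩ ⟨v, ⟨hv.le, le_rfl⟩, rfl⟩
      have hm₂ : μH[1] (c.γ '' Icc w₁ v) = edist (c.γ w₁) (c.γ v) := by
        by_contra hne2
        have hlt2 : edist (c.γ w₁) (c.γ v) < μH[1] (c.γ '' Icc w₁ v) :=
          lt_of_le_of_ne hlb2 (Ne.symm hne2)
        have hstrict : edist (c.γ u) (c.γ v)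
            < μH[1] (c.γ '' Icc u w₁) + μH[1] (c.γ '' Icc w₁ v) :=
          lt_of_le_of_lt (edist_triangle _ _ _)
            (ENNReal.add_lt_add_of_le_of_lt (edist_ne_top _ _) hlb1 hlt2)
        rw [← hsplituv, htot] at hstrict
        exact lt_irrefl _ hstrict
      have hseg3 := eq_segment_of_H1_le (hcpt w₁ v) (hconn w₁ v)
        ⟨w₁, ⟨le_rfl, hv.le⟩, rfl⟩ ⟨v, ⟨hv.le, le_rfl⟩, rfl⟩ hm₂.le
      have hvM : v ∈ M := by
        refine ⟨⟨by linarith, hvle⟩, ?_⟩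
        rw [hp, heqs]
        exact hseg3
      have := le_csSup hMbdd hvM
      linarith
    · -- s' < w₁
      set θ := min (w₁ - s') (t' - w₁) with hθ
      have hθpos : 0 < θ := lt_min (by linarith) (by linarith)
      have hθ1 : θ ≤ w₁ - s' := min_le_left _ _
      have hθ2 : θ ≤ t' - w₁ := min_le_right _ _
      obtain ⟨u, v, hu, hv, hlen, hseg2⟩ := hloc w₁ hw₁mid θ hθpos
      have hus' : s' ≤ u := by linarith
      have hvle : v ≤ t' := by linarith
      have hvuT : v < u + T := by linarith
      have hsplituv := hsplit u w₁ v hu.le hv.le hvuT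
      have htot : μH[1] (c.γ '' Icc u v) = edist (c.γ u) (c.γ v) := by
        rw [hseg2, MeasureTheory.hausdorffMeasure_segment]
      have hlb1 : edist (c.γ u) (c.γ w₁) ≤ μH[1] (c.γ '' Icc u w₁) :=
        edist_le_H1 (hconn u w₁) ⟨u, ⟨le_rfl, hu.le⟩, rfl⟩ ⟨w₁, ⟨hu.le, le_rfl⟩, rfl⟩
      have hlb2 : edist (c.γ w₁) (c.γ v) ≤ μH[1] (c.γ '' Icc w₁ v) :=
        edist_le_H1 (hconn w₁ v) ⟨w₁, ⟨le_rfl, hv.le⟩, rfl⟩ ⟨v, ⟨hv.le, le_rfl⟩, rfl⟩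
      have hm₂ : μH[1] (c.γ '' Icc w₁ v) = edist (c.γ w₁) (c.γ v) := by
        by_contra hne2
        have hlt2 : edist (c.γ w₁) (c.γ v) < μH[1] (c.γ '' Icc w₁ v) :=
          lt_of_le_of_ne hlb2 (Ne.symm hne2)
        have hstrict : edist (c.γ u) (c.γ v)
            < μH[1] (c.γ '' Icc u w₁) + μH[1] (c.γ '' Icc w₁ v) :=
          lt_of_le_of_lt (edist_triangle _ _ _)
            (ENNReal.add_lt_add_of_le_of_lt (edist_ne_top _ _) hlb1 hlt2)
        rw [← hsplituv, htot] at hstrict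
        exact lt_irrefl _ hstrict
      have hγu : c.γ u ∈ segment ℝ p (c.γ w₁) := by
        rw [← hw₁M.2]
        exact ⟨u, ⟨hus', hu.le⟩, rfl⟩
      have hγw₁ : c.γ w₁ ∈ segment ℝ (c.γ u) (c.γ v) := by
        rw [← hseg2]
        exact ⟨w₁, ⟨hu.le, hv.le⟩, rfl⟩
      have hne_uw₁ : c.γ u ≠ c.γ w₁ := by
        intro he
        have h1 : u ∈ Ico s' (s' + T) := ⟨hus', by linarith⟩
        have h2 : w₁ ∈ Ico s' (s' + T) := ⟨hw₁mem.1, by linarith⟩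
        have := injOn_window c s' h1 h2 he
        linarith
      have hW : Wbtw ℝ p (c.γ w₁) (c.γ v) :=
        wbtw_trans_outer (mem_segment_iff_wbtw.mp hγu)
          (mem_segment_iff_wbtw.mp hγw₁) hne_uw₁
      have hsplit2 : μH[1] (c.γ '' Icc s' v)
          = μH[1] (c.γ '' Icc s' w₁) + μH[1] (c.γ '' Icc w₁ v) :=
        hsplit s' w₁ v hw₁mem.1 hv.le (by linarith)
      have hval : μH[1] (c.γ '' Icc s' v) = edist p (c.γ v) := by
        rw [hsplit2, hw₁M.2, MeasureTheory.hausdorffMeasure_segment, hm₂]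
        have hd := hW.dist_add_dist
        rw [edist_dist, edist_dist, edist_dist,
          ← ENNReal.ofReal_add dist_nonneg dist_nonneg, hd]
      have hseg3 := eq_segment_of_H1_le (hcpt s' v) (hconn s' v)
        ⟨s', ⟨le_rfl, by linarith⟩, rfl⟩ ⟨v, ⟨by linarith, le_rfl⟩, rfl⟩ hval.le
      have hvM : v ∈ M := ⟨⟨by linarith, hvle⟩, hseg3⟩
      have := le_csSup hMbdd hvM
      linarith

lemma tendsto_aux (x r : ℝ) : Tendsto (fun n : ℕ => x + r * (1/(n+1))) atTop (𝓝 x) := by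
  have h0 : Tendsto (fun n : ℕ => (1:ℝ)/(n+1)) atTop (𝓝 0) :=
    tendsto_one_div_add_atTop_nhds_zero_nat
  have h1 := h0.const_mul r
  rw [mul_zero] at h1
  simpa using tendsto_const_nhds.add h1

lemma full_straight_contra (c : SCCurve) {s : ℝ}
    (h : ∀ s' t', s < s' → s' ≤ t' → t' < s + c.L →
      c.γ '' Icc s' t' = segment ℝ (c.γ s') (c.γ t')) :
    False := by
  have hT := c.hL
  set T := c.L with hTdef
  set z := c.γ s with hz
  set P := c.γ (s + T/4) with hP
  set Q := c.γ (s + T/2) with hQ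
  set R := c.γ (s + 3*T/4) with hR
  have hwin : ∀ w₁ w₂ : ℝ, w₁ ∈ Ico s (s + T) → w₂ ∈ Ico s (s+T) → w₁ ≠ w₂ →
      c.γ w₁ ≠ c.γ w₂ := by
    intro w₁ w₂ h1 h2 hne he
    exact hne (injOn_window c s h1 h2 he)
  have hPQ : P ≠ Q :=
    hwin _ _ ⟨by linarith, by linarith⟩ ⟨by linarith, by linarith⟩ (ne_of_lt (by linarith))
  have hQR : Q ≠ R :=
    hwin _ _ ⟨by linarith, by linarith⟩ ⟨by linarith, by linarith⟩ (ne_of_lt (by linarith))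
  set seq : ℕ → ℝ := fun n => T/8 * (1/(n+1)) with hseq
  have hfrac : ∀ n : ℕ, 0 < (1:ℝ)/(n+1) ∧ (1:ℝ)/(n+1) ≤ 1 := by
    intro n
    constructor
    · positivity
    · rw [div_le_one (by positivity)]
      have : (0:ℝ) ≤ n := Nat.cast_nonneg n
      linarith
  have hseqpos : ∀ n, 0 < seq n := fun n => mul_pos (by linarith) (hfrac n).1
  have hseqle : ∀ n, seq n ≤ T/8 := fun n => by
    rw [hseq]
    dsimp only
    nlinarith [(hfrac n).1, (hfrac n).2]
  have hWzPQ : Wbtw ℝ z P Q := by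
    have hWn : ∀ n : ℕ, Wbtw ℝ (c.γ (s + seq n)) P Q := by
      intro n
      have hseg := h (s + seq n) (s + T/2) (by linarith [hseqpos n])
        (by linarith [hseqle n]) (by linarith)
      have hmem : P ∈ c.γ '' Icc (s + seq n) (s + T/2) :=
        ⟨s + T/4, ⟨by linarith [hseqle n], by linarith⟩, rfl⟩
      rw [hseg] at hmem
      exact mem_segment_iff_wbtw.mp hmem
    have htend : Tendsto (fun n : ℕ => c.γ (s + seq n)) atTop (𝓝 z) := by
      have h2 := (c.cont.tendsto s).comp (tendsto_aux s (T/8))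
      simpa [hseq, Function.comp_def] using h2
    have hdn : ∀ n : ℕ, dist (c.γ (s + seq n)) P + dist P Q = dist (c.γ (s + seq n)) Q :=
      fun n => (hWn n).dist_add_dist
    have hlim1 : Tendsto (fun n : ℕ => dist (c.γ (s + seq n)) P + dist P Q) atTop
        (𝓝 (dist z P + dist P Q)) := (htend.dist tendsto_const_nhds).add tendsto_const_nhds
    have hlim2 : Tendsto (fun n : ℕ => dist (c.γ (s + seq n)) Q) atTop (𝓝 (dist z Q)) :=
      htend.dist tendsto_const_nhds
    exact dist_add_dist_eq_iff.mp (tendsto_nhds_unique (hlim1.congr hdn) hlim2)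
  have hWQRz : Wbtw ℝ Q R z := by
    have hWn : ∀ n : ℕ, Wbtw ℝ Q R (c.γ (s + T - seq n)) := by
      intro n
      have hseg := h (s + T/2) (s + T - seq n) (by linarith)
        (by linarith [hseqle n]) (by linarith [hseqpos n])
      have hmem : R ∈ c.γ '' Icc (s + T/2) (s + T - seq n) :=
        ⟨s + 3*T/4, ⟨by linarith, by linarith [hseqle n]⟩, rfl⟩
      rw [hseg] at hmem
      exact mem_segment_iff_wbtw.mp hmem
    have htend : Tendsto (fun n : ℕ => c.γ (s + T - seq n)) atTop (𝓝 z) := by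
      have h1 : Tendsto (fun n : ℕ => (s + T) + (-(T/8)) * (1/(n+1))) atTop (𝓝 (s + T)) :=
        tendsto_aux (s + T) (-(T/8))
      have h2 := (c.cont.tendsto (s + T)).comp h1
      have h3 : c.γ (s + T) = z := by rw [hz]; exact c.per s
      rw [h3] at h2
      refine h2.congr ?_
      intro n
      simp only [Function.comp, hseq]
      ring_nf
    have hdn : ∀ n : ℕ, dist Q R + dist R (c.γ (s + T - seq n)) = dist Q (c.γ (s + T - seq n)) :=
      fun n => (hWn n).dist_add_dist
    have hlim1 : Tendsto (fun n : ℕ => dist Q R + dist R (c.γ (s + T - seq n))) atTop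
        (𝓝 (dist Q R + dist R z)) := tendsto_const_nhds.add (tendsto_const_nhds.dist htend)
    have hlim2 : Tendsto (fun n : ℕ => dist Q (c.γ (s + T - seq n))) atTop (𝓝 (dist Q z)) :=
      tendsto_const_nhds.dist htend
    exact dist_add_dist_eq_iff.mp (tendsto_nhds_unique (hlim1.congr hdn) hlim2)
  have hWPQR : Wbtw ℝ P Q R := by
    have hseg := h (s + T/4) (s + 3*T/4) (by linarith) (by linarith) (by linarith)
    have hmem : Q ∈ c.γ '' Icc (s + T/4) (s + 3*T/4) :=
      ⟨s + T/2, ⟨by linarith, by linarith⟩, rfl⟩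
    rw [hseg] at hmem
    exact mem_segment_iff_wbtw.mp hmem
  have h4 : Wbtw ℝ z Q R := wbtw_trans_outer hWzPQ hWPQR hPQ
  have e1 := h4.dist_add_dist
  have e2 := hWQRz.dist_add_dist
  apply hQR
  apply dist_eq_zero.mp
  have hzR : dist z R = dist R z := dist_comm z R
  have hzQ : dist z Q = dist Q z := dist_comm z Q
  linarith

/-! #### Components of the curve minus a closed set -/

lemma exists_junction_interval (c : SCCurve) {F : Set Pt} (hFc : IsClosed F)
    (hFne : (c.image ∩ F).Nonempty) {w₀ : ℝ} (hw₀ : c.γ w₀ ∉ F) :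
    ∃ s t, s < w₀ ∧ w₀ < t ∧ t ≤ s + c.L ∧ c.γ s ∈ F ∧ c.γ t ∈ F ∧
      ∀ w ∈ Ioo s t, c.γ w ∉ F := by
  obtain ⟨y, hyΓ, hyF⟩ := hFne
  obtain ⟨wy, hwy⟩ : ∃ w, c.γ w = y := hyΓ
  obtain ⟨ws, hws, hwse⟩ := reduce c (w₀ - c.L) wy
  obtain ⟨wt, hwt, hwte⟩ := reduce c w₀ wy
  have hws' : ws ∈ Icc (w₀ - c.L) w₀ := ⟨hws.1, by have := hws.2; linarith⟩
  set Sle := Icc (w₀ - c.L) w₀ ∩ c.γ ⁻¹' F with hSle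
  have hSlec : IsCompact Sle :=
    isCompact_Icc.of_isClosed_subset (isClosed_Icc.inter (hFc.preimage c.cont))
      inter_subset_left
  have hSlene : Sle.Nonempty := ⟨ws, hws', by simp only [mem_preimage]; rw [hwse, hwy]; exact hyF⟩
  set s := sSup Sle with hsdef
  have hsmem : s ∈ Sle := hSlec.sSup_mem hSlene
  have hs_lt : s < w₀ := lt_of_le_of_ne hsmem.1.2 (fun h => hw₀ (h ▸ hsmem.2))
  have hwt' : wt ∈ Icc w₀ (w₀ + c.L) := ⟨hwt.1, hwt.2.le⟩
  set Tge := Icc w₀ (w₀ + c.L) ∩ c.γ ⁻¹' F with hTge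
  have hTgec : IsCompact Tge :=
    isCompact_Icc.of_isClosed_subset (isClosed_Icc.inter (hFc.preimage c.cont))
      inter_subset_left
  have hTgene : Tge.Nonempty := ⟨wt, hwt', by simp only [mem_preimage]; rw [hwte, hwy]; exact hyF⟩
  set t := sInf Tge with htdef
  have htmem : t ∈ Tge := hTgec.sInf_mem hTgene
  have ht_gt : w₀ < t := lt_of_le_of_ne htmem.1.1 (fun h => hw₀ (h.symm ▸ htmem.2))
  have htle : t ≤ s + c.L := by
    apply csInf_le hTgec.bddBelow
    refine ⟨⟨by linarith [hsmem.1.1], by linarith [hsmem.1.2]⟩, ?_⟩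
    simp only [mem_preimage]
    rw [c.per s]
    exact hsmem.2
  refine ⟨s, t, hs_lt, ht_gt, htle, hsmem.2, htmem.2, ?_⟩
  intro w hw hmem
  rcases le_or_gt w w₀ with h | h
  · have hwS : w ∈ Sle := ⟨⟨by linarith [hsmem.1.1, hw.1], h⟩, hmem⟩
    have := le_csSup hSlec.bddAbove hwS
    linarith [hw.1]
  · have hwT : w ∈ Tge := ⟨⟨h.le, by linarith [hw.2, hsmem.1.2]⟩, hmem⟩
    have := csInf_le hTgec.bddBelow hwT
    linarith [hw.2]

lemma component_eq (c : SCCurve) {F : Set Pt} (hF : IsClosed F) {s t w₀ : ℝ}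
    (hs : s < w₀) (ht : w₀ < t) (hts : t ≤ s + c.L)
    (hγs : c.γ s ∈ F) (hγt : c.γ t ∈ F) (hmid : ∀ w ∈ Ioo s t, c.γ w ∉ F) :
    connectedComponentIn (c.image \ F) (c.γ w₀) = c.γ '' Ioo s t := by
  set S := c.image \ F with hS
  set A := c.γ '' Ioo s t with hA
  set D := c.γ '' Icc t (s + c.L) with hD
  have hw₀Ioo : w₀ ∈ Ioo s t := ⟨hs, ht⟩
  have hxA : c.γ w₀ ∈ A := ⟨w₀, hw₀Ioo, rfl⟩
  have hsub1 : A ⊆ S := by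
    rintro y ⟨w, hw, rfl⟩
    exact ⟨⟨w, rfl⟩, hmid w hw⟩
  have hAD : ∀ y ∈ A, y ∉ D := by
    rintro y ⟨w₁, hw₁, rfl⟩ ⟨w₂, hw₂, he⟩
    rcases eq_or_lt_of_le hw₂.2 with heq | hlt
    · apply hmid w₁ hw₁
      have h2 : c.γ w₂ = c.γ s := by rw [heq]; exact c.per s
      rw [← he, h2]
      exact hγs
    · have h1 : w₁ ∈ Ico s (s + c.L) := ⟨hw₁.1.le, lt_of_lt_of_le hw₁.2 hts⟩
      have h2 : w₂ ∈ Ico s (s + c.L) := ⟨le_trans (le_of_lt (hs.trans ht)) hw₂.1, hlt⟩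
      have h3 := injOn_window c s h2 h1 he
      have := hw₂.1
      have := hw₁.2
      linarith
  have hcover : S ⊆ A ∪ D := by
    rintro y ⟨hyΓ, hyF⟩
    rw [image_window c s] at hyΓ
    obtain ⟨w, hw, rfl⟩ := hyΓ
    rcases lt_or_ge w t with h | h
    · rcases eq_or_lt_of_le hw.1 with heq | hlt
      · exact absurd (by rw [← heq]; exact hγs) hyF
      · exact Or.inl ⟨w, ⟨hlt, h⟩, rfl⟩
    · exact Or.inr ⟨w, ⟨h, hw.2⟩, rfl⟩
  have hAclosed : A = S ∩ c.γ '' Icc s t := by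
    apply Subset.antisymm
    · intro y hy
      exact ⟨hsub1 hy, image_mono Ioo_subset_Icc_self hy⟩
    · rintro y ⟨hyS, w, hw, rfl⟩
      rcases eq_or_lt_of_le hw.1 with heq | h1
      · exact absurd (by rw [← heq]; exact hγs) hyS.2
      · rcases eq_or_lt_of_le hw.2 with heq2 | h2
        · exact absurd (by rw [heq2]; exact hγt) hyS.2
        · exact ⟨w, ⟨h1, h2⟩, rfl⟩
  have hAopen : A = S \ D := by
    apply Subset.antisymm
    · intro y hy; exact ⟨hsub1 hy, hAD y hy⟩
    · rintro y ⟨hyS, hyD⟩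
      rcases hcover hyS with h | h
      · exact h
      · exact absurd h hyD
  apply Subset.antisymm
  · have hxS : c.γ w₀ ∈ S := hsub1 hxA
    rw [connectedComponentIn_eq_image hxS]
    have hclopen : IsClopen ((↑) ⁻¹' A : Set S) := by
      constructor
      · have he : ((↑) ⁻¹' A : Set S) = (↑) ⁻¹' (c.γ '' Icc s t) := by
          ext ⟨y, hyS⟩
          simp only [mem_preimage]
          constructor
          · intro h; rw [hAclosed] at h; exact h.2
          · intro h; rw [hAclosed]; exact ⟨hyS, h⟩
        rw [he]
        exact (isCompact_Icc.image c.cont).isClosed.preimage continuous_subtype_val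
      · have he : ((↑) ⁻¹' A : Set S) = (↑) ⁻¹' Dᶜ := by
          ext ⟨y, hyS⟩
          simp only [mem_preimage, mem_compl_iff]
          constructor
          · intro h; exact hAD y h
          · intro h; rw [hAopen]; exact ⟨hyS, h⟩
        rw [he]
        exact ((isCompact_Icc.image c.cont).isClosed.isOpen_compl.preimage
          continuous_subtype_val)
    have hsubA := hclopen.connectedComponent_subset
      (show (⟨c.γ w₀, hxS⟩ : S) ∈ ((↑) ⁻¹' A : Set S) from hxA)
    calc Subtype.val '' connectedComponent (⟨c.γ w₀, hxS⟩ : S)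
        ⊆ Subtype.val '' ((↑) ⁻¹' A : Set S) := image_mono hsubA
      _ ⊆ A := by rintro y ⟨z, hz, rfl⟩; exact hz
  · exact ((isPreconnected_Ioo).image _ (c.cont.continuousOn)).subset_connectedComponentIn
      hxA hsub1

lemma arc_eq_openSegment (c : SCCurve) {s t : ℝ} (hst : s < t) (hts : t < s + c.L)
    (hstraight : ∀ s' t', s < s' → s' ≤ t' → t' < t →
      c.γ '' Icc s' t' = segment ℝ (c.γ s') (c.γ t')) :
    c.γ '' Ioo s t = openSegment ℝ (c.γ s) (c.γ t) := by
  have hT := c.hL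
  set a := c.γ s with ha
  set b := c.γ t with hb
  have hwin : ∀ w₁ w₂ : ℝ, w₁ ∈ Ico s (s + c.L) → w₂ ∈ Ico s (s + c.L) → w₁ ≠ w₂ →
      c.γ w₁ ≠ c.γ w₂ := fun w₁ w₂ h1 h2 hne he => hne (injOn_window c s h1 h2 he)
  have hab : a ≠ b := hwin s t ⟨le_refl s, by linarith⟩ ⟨by linarith, hts⟩ (ne_of_lt hst)
  have hfrac : ∀ n : ℕ, 0 < (1:ℝ)/(n+1) ∧ (1:ℝ)/(n+1) ≤ 1 := by
    intro n
    constructor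
    · positivity
    · rw [div_le_one (by positivity)]
      have : (0:ℝ) ≤ n := Nat.cast_nonneg n
      linarith
  have hsegall : ∀ w ∈ Ioo s t, c.γ w ∈ segment ℝ a b := by
    intro w hw
    set sn : ℕ → ℝ := fun n => s + ((w - s)/2) * (1/(n+1)) with hsn
    set tn : ℕ → ℝ := fun n => t + (-((t - w)/2)) * (1/(n+1)) with htn
    have hwposs : 0 < w - s := by linarith [hw.1]
    have hwpost : 0 < t - w := by linarith [hw.2]
    have hsnb : ∀ n, s < sn n ∧ sn n ≤ w := by
      intro n
      obtain ⟨hp, hle⟩ := hfrac n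
      constructor
      · rw [hsn]; dsimp only; nlinarith
      · rw [hsn]; dsimp only; nlinarith
    have htnb : ∀ n, w ≤ tn n ∧ tn n < t := by
      intro n
      obtain ⟨hp, hle⟩ := hfrac n
      constructor
      · rw [htn]; dsimp only; nlinarith
      · rw [htn]; dsimp only; nlinarith
    have hWn : ∀ n : ℕ, Wbtw ℝ (c.γ (sn n)) (c.γ w) (c.γ (tn n)) := by
      intro n
      have hseg := hstraight (sn n) (tn n) (hsnb n).1 (le_trans (hsnb n).2 (htnb n).1) (htnb n).2
      have hmem : c.γ w ∈ c.γ '' Icc (sn n) (tn n) := ⟨w, ⟨(hsnb n).2, (htnb n).1⟩, rfl⟩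
      rw [hseg] at hmem
      exact mem_segment_iff_wbtw.mp hmem
    have htends : Tendsto (fun n : ℕ => c.γ (sn n)) atTop (𝓝 a) := by
      have h2 := (c.cont.tendsto s).comp (tendsto_aux s ((w-s)/2))
      simpa [hsn, Function.comp_def] using h2
    have htendt : Tendsto (fun n : ℕ => c.γ (tn n)) atTop (𝓝 b) := by
      have h2 := (c.cont.tendsto t).comp (tendsto_aux t (-((t-w)/2)))
      simpa [htn, Function.comp_def] using h2
    have hdn : ∀ n : ℕ, dist (c.γ (sn n)) (c.γ w) + dist (c.γ w) (c.γ (tn n))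
        = dist (c.γ (sn n)) (c.γ (tn n)) := fun n => (hWn n).dist_add_dist
    have hlim1 : Tendsto (fun n : ℕ => dist (c.γ (sn n)) (c.γ w) + dist (c.γ w) (c.γ (tn n)))
        atTop (𝓝 (dist a (c.γ w) + dist (c.γ w) b)) :=
      (htends.dist tendsto_const_nhds).add (tendsto_const_nhds.dist htendt)
    have hlim2 : Tendsto (fun n : ℕ => dist (c.γ (sn n)) (c.γ (tn n))) atTop
        (𝓝 (dist a b)) := htends.dist htendt
    have heq := tendsto_nhds_unique (hlim1.congr hdn) hlim2
    exact mem_segment_iff_wbtw.mpr (dist_add_dist_eq_iff.mp heq)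
  have hK : c.γ '' Icc s t = segment ℝ a b := by
    apply subset_segment_closed ((isPreconnected_Icc).image _ (c.cont.continuousOn))
      ⟨s, ⟨le_refl s, hst.le⟩, rfl⟩ ⟨t, ⟨hst.le, le_refl t⟩, rfl⟩
    rintro y ⟨w, hw, rfl⟩
    rcases eq_or_lt_of_le hw.1 with heq | h1
    · rw [← heq]; exact left_mem_segment ℝ a b
    · rcases eq_or_lt_of_le hw.2 with heq2 | h2
      · rw [heq2]; exact right_mem_segment ℝ a b
      · exact hsegall w ⟨h1, h2⟩
  have hIoo : c.γ '' Ioo s t = c.γ '' Icc s t \ {a, b} := by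
    apply Subset.antisymm
    · rintro y ⟨w, hw, rfl⟩
      refine ⟨⟨w, Ioo_subset_Icc_self hw, rfl⟩, ?_⟩
      intro hmem
      simp only [mem_insert_iff, mem_singleton_iff] at hmem
      rcases hmem with h | h
      · exact hwin w s ⟨hw.1.le, by linarith [hw.2]⟩ ⟨le_refl s, by linarith⟩
          (ne_of_gt hw.1) (by rw [h])
      · exact hwin w t ⟨hw.1.le, by linarith [hw.2]⟩ ⟨by linarith, hts⟩
          (ne_of_lt hw.2) (by rw [h])
    · rintro y ⟨⟨w, hw, rfl⟩, hne⟩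
      simp only [mem_insert_iff, mem_singleton_iff] at hne
      push_neg at hne
      rcases eq_or_lt_of_le hw.1 with heq | h1
      · exact absurd (show c.γ w = a by rw [← heq]) hne.1
      · rcases eq_or_lt_of_le hw.2 with heq2 | h2
        · exact absurd (show c.γ w = b by rw [heq2]) hne.2
        · exact ⟨w, ⟨h1, h2⟩, rfl⟩
  rw [hIoo, hK, ← insert_endpoints_openSegment]
  ext y
  simp only [mem_diff, mem_insert_iff, mem_singleton_iff]
  constructor
  · rintro ⟨h1 | h1 | h1, h2⟩
    · exact absurd (Or.inl h1) h2
    · exact absurd (Or.inr h1) h2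
    · exact h1
  · intro hy
    refine ⟨Or.inr (Or.inr hy), ?_⟩
    rintro (rfl | rfl)
    · exact hab (left_mem_openSegment_iff.mp hy)
    · exact hab (right_mem_openSegment_iff.mp hy)

end Stmt7Aux

/-- an admissible local minimizer of the contour-based energy `E_c` with
nonempty imaginary part is a simple closed polygon whose vertices all belong to `∂L`:
every connected component of `Γ \ ∂L` is an open straight segment with both endpoints
in `∂L`. -/
theorem statement_7 (L : ContourBundle) (α β : ℝ) (hα : 0 < α) (hβ : 0 < β)
    (Γ : Set Pt) (hadm : AdmissibleC L Γ) (hmin : IsLocalMinEc L α β Γ)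
    (hne : (Γ \ L.eps).Nonempty) :
    ∀ C ∈ components (Γ \ L.eps),
      ∃ a b : Pt, a ≠ b ∧ a ∈ L.eps ∧ b ∈ L.eps ∧ C = openSegment ℝ a b := by
  classical
  intro C hC
  obtain ⟨x, hxS, hCeq⟩ := hC
  obtain ⟨c, hcim⟩ := hadm.1
  subst hcim
  obtain ⟨ε, hε, hmin'⟩ := hmin
  obtain ⟨w₀, hw₀⟩ : ∃ w₀, c.γ w₀ = x := hxS.1
  have hinn : ∀ w : ℝ, c.γ w ∉ L.eps → c.γ w ∉ L.carrier := by
    intro w hne hcar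
    have : c.γ w ∈ c.image ∩ L.inn :=
      ⟨⟨w, rfl⟩, hcar, hne⟩
    rw [hadm.2] at this
    exact this
  have hloc : ∀ w : ℝ, c.γ w ∉ L.eps → ∀ θ : ℝ, 0 < θ → ∃ u v, u < w ∧ w < v ∧ v - u < θ ∧
      c.γ '' Icc u v = segment ℝ (c.γ u) (c.γ v) := by
    intro w hne θ hθ
    exact Stmt7Aux.local_straight hβ hε c hadm hmin' (hinn w hne) hθ
  by_cases hF : (c.image ∩ L.eps).Nonempty
  · obtain ⟨s, t, hs, ht, hts, hgs, hgt, hmid⟩ :=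
      Stmt7Aux.exists_junction_interval c (Stmt7Aux.eps_closed L) hF
        (show c.γ w₀ ∉ L.eps by rw [hw₀]; exact hxS.2)
    have hstr : ∀ s' t', s < s' → s' ≤ t' → t' < t →
        c.γ '' Icc s' t' = segment ℝ (c.γ s') (c.γ t') := by
      intro s' t' h1 h2 h3
      refine Stmt7Aux.straight_on c hts ?_ h1 h2 h3
      intro w hw θ hθ
      exact hloc w (hmid w hw) θ hθ
    rcases lt_or_eq_of_le hts with hT | hT
    · have hCeq2 : C = c.γ '' Ioo s t := by
        rw [hCeq, ← hw₀]
        exact Stmt7Aux.component_eq c (Stmt7Aux.eps_closed L) hs ht hts hgs hgt hmid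
      have hne2 : c.γ s ≠ c.γ t := by
        intro h
        have := Stmt7Aux.injOn_window c s (⟨le_refl s, by linarith [c.hL]⟩ : s ∈ Ico s (s + c.L))
          (⟨by linarith, by linarith⟩ : t ∈ Ico s (s + c.L)) h
        linarith [hs.trans ht]
      refine ⟨c.γ s, c.γ t, hne2, hgs, hgt, ?_⟩
      rw [hCeq2]
      exact Stmt7Aux.arc_eq_openSegment c (hs.trans ht) hT hstr
    · exfalso
      refine Stmt7Aux.full_straight_contra c (s := s) ?_
      intro s' t' h1 h2 h3
      exact hstr s' t' h1 h2 (by rw [hT]; exact h3)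
  · exfalso
    refine Stmt7Aux.full_straight_contra c (s := w₀) ?_
    intro s' t' h1 h2 h3
    refine Stmt7Aux.straight_on c (le_refl (w₀ + c.L)) ?_ h1 h2 h3
    intro w hw θ hθ
    refine hloc w ?_ θ hθ
    intro hmem
    exact hF ⟨c.γ w, ⟨w, rfl⟩, hmem⟩
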